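/- arXiv:1704.00531 — 6 statements merged into one kernel-verified Lean document; each statement's English description precedes it below -/
import Mathlib

section
/- Let (X,d) be an unbounded metric space, p ∈ X, and r̃ a scaling sequence. The class α₀ = α₀(X,r̃) of all sequences x̃ ∈ X̃_{∞,r̃} with d̃_{r̃}(x̃) = 0 is a common point of all pretangent spaces Ω_{∞,r̃}^X (i.e., α₀ belongs to every maximal clique of G_{X,r̃}); in particular, the graph G_{X,r̃} is connected. -/
open Filter Topology

/-- A scaling sequence: a sequence of positive reals tending to infinity. -/
def ScalingSeq (r : ℕ → ℝ) : Prop :=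
  (∀ n, 0 < r n) ∧ Tendsto r atTop atTop

/-- `x ∈ X̃_{∞,r̃}`: the sequence `x` satisfies `d(x_n,p) → ∞` and the finite limit
`d̃_r̃(x̃) = lim d(x_n,p)/r_n` exists.  Here `d` is the distance function of the space. -/
def SeqAdm {Y : Type*} (d : Y → Y → ℝ) (p : Y) (r : ℕ → ℝ) (x : ℕ → Y) : Prop :=
  Tendsto (fun n => d (x n) p) atTop atTop ∧
  ∃ L : ℝ, Tendsto (fun n => d (x n) p / r n) atTop (𝓝 L)

/-- The equivalence `x̃ ≡ ỹ ⇔ lim d(x_n,y_n)/r_n = 0`. -/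
def SeqEquiv {Y : Type*} (d : Y → Y → ℝ) (r : ℕ → ℝ) (x y : ℕ → Y) : Prop :=
  Tendsto (fun n => d (x n) (y n) / r n) atTop (𝓝 0)

/-- Mutual stability: the limit `lim d(x_n,y_n)/r_n` exists (and is finite). -/
def MutStable {Y : Type*} (d : Y → Y → ℝ) (r : ℕ → ℝ) (x y : ℕ → Y) : Prop :=
  ∃ L : ℝ, Tendsto (fun n => d (x n) (y n) / r n) atTop (𝓝 L)

/-- A set of sequences representing a clique in the graph `G_{X,r̃}`: all members are
admissible, the set is a union of equivalence classes, and all members are pairwise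
mutually stable. -/
def IsCliqueSet {Y : Type*} (d : Y → Y → ℝ) (p : Y) (r : ℕ → ℝ) (C : Set (ℕ → Y)) : Prop :=
  (∀ x ∈ C, SeqAdm d p r x) ∧
  (∀ x ∈ C, ∀ y, SeqAdm d p r y → SeqEquiv d r x y → y ∈ C) ∧
  (∀ x ∈ C, ∀ y ∈ C, MutStable d r x y)

/-- A pretangent space `Ω^X_{∞,r̃}`, encoded as the (union of the) maximal clique of the
graph `G_{X,r̃}`. -/
def IsPretangent {Y : Type*} (d : Y → Y → ℝ) (p : Y) (r : ℕ → ℝ) (C : Set (ℕ → Y)) : Prop :=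
  IsCliqueSet d p r C ∧ ∀ D, IsCliqueSet d p r D → C ⊆ D → D = C

/-- The point `α₀ = α₀(X,r̃)`: the class of admissible sequences with `d̃_r̃(x̃) = 0`. -/
def alphaZero {Y : Type*} (d : Y → Y → ℝ) (p : Y) (r : ℕ → ℝ) : Set (ℕ → Y) :=
  {x | SeqAdm d p r x ∧ Tendsto (fun n => d (x n) p / r n) atTop (𝓝 0)}

section Aux

open Filter Topology

private lemma sqrt_comp_atTop {r : ℕ → ℝ} (h : Tendsto r atTop atTop) :
    Tendsto (fun n => Real.sqrt (r n)) atTop atTop := by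
  rw [tendsto_atTop]
  intro M
  filter_upwards [h.eventually_ge_atTop ((max M 0) ^ 2)] with n hn
  calc M ≤ max M 0 := le_max_left _ _
    _ = Real.sqrt ((max M 0) ^ 2) := by
        rw [Real.sqrt_sq (le_max_right _ _)]
    _ ≤ Real.sqrt (r n) := Real.sqrt_le_sqrt hn

/-- Key stability lemma: if `d(x n, p)/r n → L` and `d(z n, p)/r n → 0`, then
`d(x n, z n)/r n → L`. -/
private lemma tendsto_dist_pair {Y : Type*} [MetricSpace Y] {p : Y} {r : ℕ → ℝ}
    (hr : ∀ n, 0 < r n) {x z : ℕ → Y} {L : ℝ}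
    (hx : Tendsto (fun n => dist (x n) p / r n) atTop (𝓝 L))
    (hz : Tendsto (fun n => dist (z n) p / r n) atTop (𝓝 0)) :
    Tendsto (fun n => dist (x n) (z n) / r n) atTop (𝓝 L) := by
  have h1 : Tendsto (fun n => dist (x n) (z n) / r n - dist (x n) p / r n) atTop (𝓝 0) := by
    apply squeeze_zero_norm' (a := fun n => dist (z n) p / r n) _ hz
    filter_upwards with n
    have key : |dist (x n) (z n) - dist (x n) p| ≤ dist (z n) p := by
      rw [dist_comm (x n) (z n), dist_comm (x n) p]
      exact abs_dist_sub_le (z n) p (x n)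
    rw [div_sub_div_same, Real.norm_eq_abs, abs_div, abs_of_pos (hr n)]
    exact div_le_div_of_nonneg_right key (hr n).le
  have := h1.add hx
  simp only [sub_add_cancel, zero_add] at this
  exact this

end Aux

private lemma alphaZero_nonempty' {X : Type*} [MetricSpace X]
    (hX : ¬ Bornology.IsBounded (Set.univ : Set X)) (p : X)
    (r : ℕ → ℝ) (hr : ScalingSeq r) : (alphaZero dist p r).Nonempty := by
  classical
  have hq : ∀ k : ℕ, ∃ y : X, (k : ℝ) ≤ dist y p := by
    intro k
    by_contra h
    push_neg at h
    refine hX ((Metric.isBounded_closedBall (x := p) (r := k)).subset ?_)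
    intro y _
    exact Metric.mem_closedBall.mpr (h y).le
  choose q hq using hq
  set P : ℕ → ℕ → Prop := fun n k => ∀ j ≤ k, dist (q j) p ≤ Real.sqrt (r n) with hP
  set f : ℕ → ℕ := fun n => Nat.findGreatest (P n) n with hf
  have hsr : Tendsto (fun n => Real.sqrt (r n)) atTop atTop := sqrt_comp_atTop hr.2
  -- f tends to infinity
  have hftop : Tendsto f atTop atTop := by
    rw [tendsto_atTop]
    intro k
    have hM : ∀ᶠ n in atTop, ∀ j ≤ k, dist (q j) p ≤ Real.sqrt (r n) := by
      have hne : (Finset.range (k + 1)).Nonempty := ⟨0, by simp⟩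
      filter_upwards [hsr.eventually_ge_atTop
        ((Finset.range (k + 1)).sup' hne (fun j => dist (q j) p))] with n hn j hj
      exact (Finset.le_sup' (fun j => dist (q j) p)
        (Finset.mem_range.mpr (Nat.lt_succ_of_le hj))).trans hn
    filter_upwards [hM, eventually_ge_atTop k] with n hn hk
    exact Nat.le_findGreatest hk hn
  have hratio : Tendsto (fun n => dist (q (f n)) p / r n) atTop (𝓝 0) := by
    apply squeeze_zero' (g := fun n => Real.sqrt (r n) / r n)
    · filter_upwards with n
      exact div_nonneg dist_nonneg (hr.1 n).le
    · filter_upwards [hsr.eventually_ge_atTop (dist (q 0) p)] with n hn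
      have h0 : P n 0 := by
        intro j hj
        interval_cases j
        exact hn
      have hspec : P n (f n) := Nat.findGreatest_spec (Nat.zero_le n) h0
      exact div_le_div_of_nonneg_right (hspec (f n) le_rfl) (hr.1 n).le
    · simp only [Real.sqrt_div_self']
      simpa only [one_div, Pi.inv_def] using hsr.inv_tendsto_atTop
  refine ⟨fun n => q (f n), ⟨?_, ⟨0, hratio⟩⟩, hratio⟩
  apply tendsto_atTop_mono (fun n => hq (f n))
  exact tendsto_natCast_atTop_atTop.comp hftop

/-- `α₀` is itself a clique set, and it is stable against every admissible sequence. -/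
private lemma mutStable_of_adm {X : Type*} [MetricSpace X] {p : X}
    {r : ℕ → ℝ} (hr : ScalingSeq r) {x z : ℕ → X}
    (hx : SeqAdm dist p r x) (hz : z ∈ alphaZero dist p r) :
    MutStable dist r x z := by
  obtain ⟨L, hL⟩ := hx.2
  exact ⟨L, tendsto_dist_pair hr.1 hL hz.2⟩

/-- For an unbounded metric space `X`, `p ∈ X` and a scaling sequence
`r̃`, the class `α₀` is a (nonempty) common point of all pretangent spaces
`Ω^X_{∞,r̃}`, i.e. `α₀` belongs to every maximal clique of `G_{X,r̃}`; in particular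
the vertex `α₀` is mutually stable with every vertex of `G_{X,r̃}`, so the graph
`G_{X,r̃}` is connected. -/
theorem alphaZero_mem_all_pretangent {X : Type*} [MetricSpace X]
    (hX : ¬ Bornology.IsBounded (Set.univ : Set X)) (p : X)
    (r : ℕ → ℝ) (hr : ScalingSeq r) :
    (alphaZero dist p r).Nonempty ∧
    (∀ C : Set (ℕ → X), IsPretangent dist p r C → alphaZero dist p r ⊆ C) ∧
    (∀ x : ℕ → X, SeqAdm dist p r x → ∀ z ∈ alphaZero dist p r, MutStable dist r x z) := by
  have hne := alphaZero_nonempty' hX p r hr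
  have symmMS : ∀ a b : ℕ → X, MutStable dist r a b → MutStable dist r b a := by
    rintro a b ⟨L, hL⟩
    exact ⟨L, hL.congr (fun n => by rw [dist_comm])⟩
  refine ⟨hne, ?_, fun x hx z hz => mutStable_of_adm hr hx hz⟩
  intro C hC
  obtain ⟨hCclique, hCmax⟩ := hC
  have hDclique : IsCliqueSet dist p r (C ∪ alphaZero dist p r) := by
    refine ⟨?_, ?_, ?_⟩
    · rintro x (hx | hx)
      · exact hCclique.1 x hx
      · exact hx.1
    · rintro x (hx | hx) y hy hxy
      · exact Or.inl (hCclique.2.1 x hx y hy hxy)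
      · refine Or.inr ⟨hy, ?_⟩
        apply squeeze_zero' (g := fun n => dist (x n) (y n) / r n + dist (x n) p / r n)
        · filter_upwards with n
          exact div_nonneg dist_nonneg (hr.1 n).le
        · filter_upwards with n
          rw [← add_div]
          apply div_le_div_of_nonneg_right _ (hr.1 n).le
          calc dist (y n) p ≤ dist (y n) (x n) + dist (x n) p := dist_triangle _ _ _
            _ = dist (x n) (y n) + dist (x n) p := by rw [dist_comm]
        · simpa using hxy.add hx.2
    · rintro x (hx | hx) y (hy | hy)
      · exact hCclique.2.2 x hx y hy
      · exact mutStable_of_adm hr (hCclique.1 x hx) hy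
      · exact symmMS _ _ (mutStable_of_adm hr (hCclique.1 y hy) hx)
      · exact mutStable_of_adm hr hx.1 hy
  have hD := hCmax _ hDclique Set.subset_union_left
  intro z hz
  rw [← hD]
  exact Or.inr hz
end

section
/- For every unbounded metric space (X,d) with marked point p ∈ X there exists a scaling sequence r̃ and a pretangent space Ω_{∞,r̃}^X consisting of at least two points. -/
open Filter Topology

/-- The metric `ρ` of a pretangent space: `ρ(α,β) = lim d(x_n,y_n)/r_n`. -/
noncomputable def seqDist {Y : Type*} (d : Y → Y → ℝ) (r : ℕ → ℝ) (x y : ℕ → Y) : ℝ :=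
  limUnder atTop (fun n => d (x n) (y n) / r n)


section Aux

open Filter Topology

/-- If `dist (x n) (y n) / r n → L` and `z ≡ x`, `w ≡ y`, then `dist (z n) (w n) / r n → L`. -/
lemma tendsto_div_of_equiv {Y : Type*} [MetricSpace Y] {r : ℕ → ℝ} (hr : ∀ n, 0 < r n)
    {x y z w : ℕ → Y} {L : ℝ}
    (hL : Tendsto (fun n => dist (x n) (y n) / r n) atTop (𝓝 L))
    (hz : SeqEquiv dist r z x) (hw : SeqEquiv dist r w y) :
    Tendsto (fun n => dist (z n) (w n) / r n) atTop (𝓝 L) := by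
  have hbound : ∀ n, ‖dist (z n) (w n) / r n - dist (x n) (y n) / r n‖ ≤
      dist (z n) (x n) / r n + dist (w n) (y n) / r n := by
    intro n
    have h1 : |dist (z n) (w n) - dist (x n) (y n)| ≤
        dist (z n) (x n) + dist (w n) (y n) := by
      calc |dist (z n) (w n) - dist (x n) (y n)|
          ≤ |dist (z n) (w n) - dist (x n) (w n)| +
            |dist (x n) (w n) - dist (x n) (y n)| := abs_sub_le _ _ _
        _ ≤ dist (z n) (x n) + dist (w n) (y n) := by
            gcongr
            · exact abs_dist_sub_le _ _ _
            · rw [dist_comm (x n) (w n), dist_comm (x n) (y n)]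
              exact abs_dist_sub_le _ _ _
    have hrp := hr n
    rw [Real.norm_eq_abs, ← sub_div, abs_div, abs_of_pos hrp, ← add_div]
    exact div_le_div_of_nonneg_right h1 hrp.le
  have hg : Tendsto (fun n => dist (z n) (x n) / r n + dist (w n) (y n) / r n)
      atTop (𝓝 0) := by simpa using hz.add hw
  have key := squeeze_zero_norm hbound hg
  have := key.add hL
  simpa using this

lemma seqEquiv_refl {Y : Type*} [MetricSpace Y] (r : ℕ → ℝ) (x : ℕ → Y) :
    SeqEquiv dist r x x := by
  unfold SeqEquiv
  simp

lemma seqEquiv_symm {Y : Type*} [MetricSpace Y] {r : ℕ → ℝ} {x y : ℕ → Y}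
    (h : SeqEquiv dist r x y) : SeqEquiv dist r y x := by
  unfold SeqEquiv at *
  simpa [dist_comm] using h

lemma seqEquiv_trans {Y : Type*} [MetricSpace Y] {r : ℕ → ℝ} (hr : ∀ n, 0 < r n)
    {x y z : ℕ → Y} (h1 : SeqEquiv dist r x y) (h2 : SeqEquiv dist r y z) :
    SeqEquiv dist r x z :=
  tendsto_div_of_equiv hr h2 h1 (seqEquiv_refl r z)

end Aux

/-- For every unbounded metric space `(X,d)` with marked point `p ∈ X`
there exist a scaling sequence `r̃` and a pretangent space `Ω^X_{∞,r̃}` containing at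
least two (distinct) points. -/
theorem exists_pretangent_with_two_points {X : Type*} [MetricSpace X]
    (hX : ¬ Bornology.IsBounded (Set.univ : Set X)) (p : X) :
    ∃ r : ℕ → ℝ, ScalingSeq r ∧ ∃ C : Set (ℕ → X), IsPretangent dist p r C ∧
      ∃ x ∈ C, ∃ y ∈ C, ¬ SeqEquiv dist r x y := by
  -- Step 1: produce points far from `p`.
  have hfar : ∀ R : ℝ, ∃ x : X, R < dist x p := by
    intro R
    by_contra h
    push_neg at h
    exact hX ((Metric.isBounded_iff_subset_closedBall p).2
      ⟨R, fun x _ => Metric.mem_closedBall.2 (h x)⟩)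
  -- Step 2: recursive sequence with rapidly growing distances.
  let q : ℕ → X := fun n => Nat.rec (Classical.choose (hfar 1))
      (fun n qn => Classical.choose (hfar (((n : ℝ) + 2) * dist qn p))) n
  set a : ℕ → ℝ := fun n => dist (q n) p with ha
  have ha0 : 1 < a 0 := Classical.choose_spec (hfar 1)
  have hstep : ∀ n : ℕ, ((n : ℝ) + 2) * a n < a (n + 1) := fun n =>
    Classical.choose_spec (hfar (((n : ℝ) + 2) * dist (q n) p))
  have hpos : ∀ n : ℕ, 1 < a n := by
    intro n
    induction n with
    | zero => exact ha0
    | succ n ih =>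
      have h2 : (1 : ℝ) ≤ ((n : ℝ) + 2) * a n := by nlinarith
      linarith [hstep n]
  have hapos : ∀ n : ℕ, 0 < a n := fun n => lt_trans one_pos (hpos n)
  have hgrow : ∀ n : ℕ, ((n : ℝ) + 1) ≤ a n := by
    intro n
    induction n with
    | zero => simpa using ha0.le
    | succ n ih =>
      have h1 : ((n : ℝ) + 2) ≤ ((n : ℝ) + 2) * a n := by nlinarith [hpos n]
      have := hstep n
      push_cast
      linarith
  have haTop : Tendsto a atTop atTop :=
    tendsto_atTop_mono hgrow
      (tendsto_atTop_add_const_right _ 1 tendsto_natCast_atTop_atTop)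
  refine ⟨a, ⟨hapos, haTop⟩, ?_⟩
  -- the two sequences
  set x : ℕ → X := q with hx
  set y : ℕ → X := fun n => q (n - 1) with hy
  have hxdiv : Tendsto (fun n => dist (x n) p / a n) atTop (𝓝 1) := by
    have : (fun n => dist (x n) p / a n) = fun _ => (1 : ℝ) := by
      funext n
      exact div_self (hapos n).ne'
    rw [this]
    exact tendsto_const_nhds
  have hxadm : SeqAdm dist p a x := ⟨haTop, 1, hxdiv⟩
  -- ratio a (n-1) / a n → 0
  have hratio : Tendsto (fun n => a (n - 1) / a n) atTop (𝓝 0) := by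
    have hf : ∀ n : ℕ, 0 ≤ a (n - 1) / a n :=
      fun n => div_nonneg (hapos _).le (hapos _).le
    have hft : ∀ n : ℕ, a (n - 1) / a n ≤ 1 / ((n : ℝ) + 1) := by
      intro n
      cases n with
      | zero =>
        simp only [Nat.zero_sub]
        rw [div_self (hapos 0).ne']
        norm_num
      | succ m =>
        have h1 : ((m : ℝ) + 2) * a m < a (m + 1) := hstep m
        have h2 : a (m + 1 - 1) = a m := by norm_num
        rw [h2, div_le_div_iff₀ (hapos (m + 1)) (by positivity)]
        push_cast
        nlinarith [hapos m, hapos (m + 1)]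
    exact squeeze_zero hf hft tendsto_one_div_add_atTop_nhds_zero_nat
  have hy0 : Tendsto (fun n => dist (y n) p / a n) atTop (𝓝 0) := hratio
  have hyadm : SeqAdm dist p a y := by
    constructor
    · refine tendsto_atTop_mono (f := fun n : ℕ => (n : ℝ)) ?_ tendsto_natCast_atTop_atTop
      intro n
      have h1 := hgrow (n - 1)
      have hn : (n : ℝ) ≤ (↑(n - 1) : ℝ) + 1 := by
        cases n with
        | zero => norm_num
        | succ m => simp
      exact le_trans hn h1
    · exact ⟨0, hy0⟩
  -- dist (x n) (y n) / a n → 1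
  have hxy1 : Tendsto (fun n => dist (x n) (y n) / a n) atTop (𝓝 1) := by
    have hbound : ∀ n, ‖dist (x n) (y n) / a n - dist (x n) p / a n‖ ≤
        dist (y n) p / a n := by
      intro n
      rw [Real.norm_eq_abs, ← sub_div, abs_div, abs_of_pos (hapos n)]
      have h1 : |dist (x n) (y n) - dist (x n) p| ≤ dist (y n) p := by
        rw [dist_comm (x n) (y n), dist_comm (x n) p]
        exact abs_dist_sub_le _ _ _
      exact div_le_div_of_nonneg_right h1 (hapos n).le
    have hkey := squeeze_zero_norm hbound hy0
    have := hkey.add hxdiv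
    simpa using this
  -- base clique
  set C0 : Set (ℕ → X) :=
    {z | SeqAdm dist p a z ∧ (SeqEquiv dist a z x ∨ SeqEquiv dist a z y)} with hC0
  have hxC0 : x ∈ C0 := ⟨hxadm, Or.inl (seqEquiv_refl a x)⟩
  have hyC0 : y ∈ C0 := ⟨hyadm, Or.inr (seqEquiv_refl a y)⟩
  have hstab : ∀ z ∈ C0, ∀ w ∈ C0, MutStable dist a z w := by
    rintro z ⟨-, hz⟩ w ⟨-, hw⟩
    have h0 : Tendsto (fun n => dist (x n) (x n) / a n) atTop (𝓝 0) := seqEquiv_refl a x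
    have h0' : Tendsto (fun n => dist (y n) (y n) / a n) atTop (𝓝 0) := seqEquiv_refl a y
    have hyx1 : Tendsto (fun n => dist (y n) (x n) / a n) atTop (𝓝 1) := by
      simpa [dist_comm] using hxy1
    rcases hz with hz | hz <;> rcases hw with hw | hw
    · exact ⟨0, tendsto_div_of_equiv hapos h0 hz hw⟩
    · exact ⟨1, tendsto_div_of_equiv hapos hxy1 hz hw⟩
    · exact ⟨1, tendsto_div_of_equiv hapos hyx1 hz hw⟩
    · exact ⟨0, tendsto_div_of_equiv hapos h0' hz hw⟩
  have hC0clique : IsCliqueSet dist p a C0 := by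
    refine ⟨fun z hz => hz.1, ?_, hstab⟩
    rintro z ⟨-, hz⟩ w hwadm hzw
    refine ⟨hwadm, ?_⟩
    rcases hz with hz | hz
    · exact Or.inl (seqEquiv_trans hapos (seqEquiv_symm hzw) hz)
    · exact Or.inr (seqEquiv_trans hapos (seqEquiv_symm hzw) hz)
  -- Zorn's lemma for a maximal clique containing C0
  set S : Set (Set (ℕ → X)) := {C | IsCliqueSet dist p a C ∧ C0 ⊆ C} with hS
  have hchain : ∀ c ⊆ S, IsChain (· ⊆ ·) c → c.Nonempty →
      ∃ ub ∈ S, ∀ s ∈ c, s ⊆ ub := by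
    rintro c hc hchain ⟨c0, hc0⟩
    refine ⟨⋃₀ c, ⟨⟨?_, ?_, ?_⟩, ?_⟩, fun s hs => Set.subset_sUnion_of_mem hs⟩
    · rintro z ⟨D, hD, hzD⟩
      exact (hc hD).1.1 z hzD
    · rintro z ⟨D, hD, hzD⟩ w hwadm hzw
      exact ⟨D, hD, (hc hD).1.2.1 z hzD w hwadm hzw⟩
    · rintro z ⟨D, hD, hzD⟩ w ⟨E, hE, hwE⟩
      rcases hchain.total hD hE with h | h
      · exact (hc hE).1.2.2 z (h hzD) w hwE
      · exact (hc hD).1.2.2 z hzD w (h hwE)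
    · exact (hc hc0).2.trans (Set.subset_sUnion_of_mem hc0)
  obtain ⟨M, hC0M, hMmax⟩ := zorn_subset_nonempty S hchain C0 ⟨hC0clique, subset_rfl⟩
  refine ⟨M, ⟨hMmax.prop.1, ?_⟩, x, hC0M hxC0, y, hC0M hyC0, ?_⟩
  · intro D hD hMD
    have hDS : D ∈ S := ⟨hD, hC0M.trans hMD⟩
    exact (hMmax.eq_of_subset hDS hMD).symm
  · intro h
    have := tendsto_nhds_unique h hxy1
    norm_num at this
end

section
/- Let (X,d) be an unbounded metric space, p ∈ X, and for every scaling sequence r̃ let α₀ be the equivalence class of all x̃ ∈ X̃_{∞,r̃} with d̃_{r̃}(x̃) = 0. Define F_2(x_1, x_2) := (min(d(x_1,p), d(x_2,p)) · d(x_1,x_2)) / (max(d(x_1,p), d(x_2,p)))^2 for (x_1,x_2) ≠ (p,p) and F_2(p,p) := 0. Then the following are equivalent: (i) for every scaling sequence r̃ the graph G_{X,r̃} is a star with center α₀; (ii) F_2(x_1, x_2) → 0 as x_1, x_2 → ∞. -/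
open Filter Topology

open scoped Classical

/-- The function `F₂` of the Corollary:
`F₂(x₁,x₂) = (min(d(x₁,p),d(x₂,p)) · d(x₁,x₂)) / (max(d(x₁,p),d(x₂,p)))²`
for `(x₁,x₂) ≠ (p,p)` and `F₂(p,p) = 0`. -/
noncomputable def F2 {X : Type*} [MetricSpace X] (p : X) (x₁ x₂ : X) : ℝ :=
  if x₁ = p ∧ x₂ = p then 0
  else (min (dist x₁ p) (dist x₂ p) * dist x₁ x₂) / max (dist x₁ p) (dist x₂ p) ^ 2

private lemma F2_comm' {X : Type*} [MetricSpace X] (p u v : X) : F2 p u v = F2 p v u := by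
  unfold F2
  by_cases h : u = p ∧ v = p
  · rw [if_pos h, if_pos ⟨h.2, h.1⟩]
  · rw [if_neg h, if_neg (fun h' => h ⟨h'.2, h'.1⟩), dist_comm u v, min_comm, max_comm]

/-- **Corollary.** Let `(X,d)` be an unbounded metric space, `p ∈ X`, and
for every scaling sequence `r̃` let `α₀` be the class of all `x̃ ∈ X̃_{∞,r̃}` with
`d̃_r̃(x̃) = 0`.  The following are equivalent:
(i) for every scaling sequence `r̃` the graph `G_{X,r̃}` is a star with center `α₀`
(every vertex distinct from `α₀` is adjacent to `α₀`, and there are no other edges);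
(ii) `F₂(x₁,x₂) → 0` as `x₁, x₂ → ∞`. -/
theorem star_graph_iff {X : Type*} [MetricSpace X]
    (hX : ¬ Bornology.IsBounded (Set.univ : Set X)) (p : X) :
    (∀ r : ℕ → ℝ, ScalingSeq r →
      (∀ x : ℕ → X, SeqAdm dist p r x → x ∉ alphaZero dist p r →
        ∀ z ∈ alphaZero dist p r, MutStable dist r x z ∧ ¬ SeqEquiv dist r x z) ∧
      (∀ x y : ℕ → X, SeqAdm dist p r x → SeqAdm dist p r y →
        x ∉ alphaZero dist p r → y ∉ alphaZero dist p r → ¬ SeqEquiv dist r x y →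
        ¬ MutStable dist r x y)) ↔
    (∀ ε > (0 : ℝ), ∃ M : ℝ, ∀ x₁ x₂ : X, M ≤ dist x₁ p → M ≤ dist x₂ p →
      F2 p x₁ x₂ < ε) := by
  constructor
  · -- (i) → (ii)
    intro H
    by_contra hcon
    push_neg at hcon
    obtain ⟨ε, εpos, hcon⟩ := hcon
    choose a b ha hb hF using fun n : ℕ => hcon ((n : ℝ) + 1)
    set x : ℕ → X := fun n => if dist (a n) p ≤ dist (b n) p then a n else b n with hxdef
    set y : ℕ → X := fun n => if dist (a n) p ≤ dist (b n) p then b n else a n with hydef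
    have hxy : ∀ n, dist (x n) p ≤ dist (y n) p := by
      intro n; simp only [hxdef, hydef]; split_ifs with h; exacts [h, (not_le.mp h).le]
    have hxlb : ∀ n : ℕ, (n : ℝ) + 1 ≤ dist (x n) p := by
      intro n; simp only [hxdef]; split_ifs; exacts [ha n, hb n]
    have hylb : ∀ n : ℕ, (n : ℝ) + 1 ≤ dist (y n) p := fun n => (hxlb n).trans (hxy n)
    have hFxy : ∀ n, ε ≤ F2 p (x n) (y n) := by
      intro n; simp only [hxdef, hydef]; split_ifs
      · exact hF n
      · rw [F2_comm']; exact hF n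
    set r : ℕ → ℝ := fun n => dist (y n) p with hrdef
    have hrpos : ∀ n, 0 < r n := fun n => lt_of_lt_of_le (by positivity) (hylb n)
    set t : ℕ → ℝ := fun n => dist (x n) p / r n with htdef
    set s : ℕ → ℝ := fun n => dist (x n) (y n) / r n with hsdef
    have hxp : ∀ n, x n ≠ p := by
      intro n h
      have h2 := hxlb n
      rw [h, dist_self] at h2
      have h3 : (0:ℝ) ≤ n := Nat.cast_nonneg n
      linarith
    have hF2eq : ∀ n, F2 p (x n) (y n) = t n * s n := by
      intro n
      have hne : ¬ (x n = p ∧ y n = p) := fun h => hxp n h.1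
      have hr0 : r n ≠ 0 := (hrpos n).ne'
      unfold F2
      rw [if_neg hne, min_eq_left (hxy n), max_eq_right (hxy n), htdef, hsdef]
      rw [div_mul_div_comm, ← pow_two]
    have hts : ∀ n, ε ≤ t n * s n := fun n => (hF2eq n) ▸ (hFxy n)
    have ht1 : ∀ n, t n ≤ 1 := fun n => (div_le_one (hrpos n)).mpr (hxy n)
    have ht0 : ∀ n, 0 ≤ t n := fun n => div_nonneg dist_nonneg (hrpos n).le
    have hs0 : ∀ n, 0 ≤ s n := fun n => div_nonneg dist_nonneg (hrpos n).le
    have hs2 : ∀ n, s n ≤ 2 := by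
      intro n
      rw [hsdef, div_le_iff₀ (hrpos n)]
      calc dist (x n) (y n) ≤ dist (x n) p + dist p (y n) := dist_triangle _ _ _
        _ ≤ r n + r n := by
            rw [dist_comm p (y n)]; exact add_le_add (hxy n) le_rfl
        _ = 2 * r n := by ring
    have htlb : ∀ n, ε / 2 ≤ t n := fun n => by nlinarith [hts n, hs2 n, ht0 n, hs0 n]
    have hslb : ∀ n, ε ≤ s n := fun n => by nlinarith [hts n, ht1 n, hs0 n]
    obtain ⟨T, hTmem, φ, hφ, hTconv⟩ := tendsto_subseq_of_bounded
      (Metric.isBounded_Icc (ε/2) 1) (x := t) (fun n => Set.mem_Icc.mpr ⟨htlb n, ht1 n⟩)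
    obtain ⟨S, hSmem, ψ, hψ, hSconv⟩ := tendsto_subseq_of_bounded
      (Metric.isBounded_Icc ε 2) (x := s ∘ φ)
      (fun n => Set.mem_Icc.mpr ⟨hslb _, hs2 _⟩)
    rw [closure_Icc] at hTmem hSmem
    set σ : ℕ → ℕ := φ ∘ ψ with hσdef
    have hσmono : StrictMono σ := hφ.comp hψ
    have hσle : ∀ n, n ≤ σ n := fun n => hσmono.le_apply
    have hTc : Tendsto (fun n => dist (x (σ n)) p / r (σ n)) atTop (𝓝 T) := by
      have := hTconv.comp hψ.tendsto_atTop
      refine this.congr fun n => ?_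
      simp only [Function.comp_apply, htdef, hσdef]
    have hSc : Tendsto (fun n => dist (x (σ n)) (y (σ n)) / r (σ n)) atTop (𝓝 S) := by
      refine hSconv.congr fun n => ?_
      simp only [Function.comp_apply, hsdef, hσdef]
    have hcast : Tendsto (fun n : ℕ => (n : ℝ) + 1) atTop atTop :=
      tendsto_atTop_add_const_right atTop 1 tendsto_natCast_atTop_atTop
    have hbnd : ∀ n : ℕ, (n : ℝ) + 1 ≤ (σ n : ℝ) + 1 := fun n => by
      have := hσle n; exact_mod_cast add_le_add (Nat.cast_le.mpr this) le_rfl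
    have hRpos : ∀ n, 0 < r (σ n) := fun n => hrpos _
    have hRtop : Tendsto (fun n => r (σ n)) atTop atTop := by
      refine tendsto_atTop_mono (fun n => ?_) hcast
      exact (hbnd n).trans (hylb _)
    obtain ⟨_, H2⟩ := H (fun n => r (σ n)) ⟨hRpos, hRtop⟩
    have hTpos : 0 < T := lt_of_lt_of_le (by positivity) hTmem.1
    have hSpos : 0 < S := lt_of_lt_of_le εpos hSmem.1
    have hYone : Tendsto (fun n => dist (y (σ n)) p / r (σ n)) atTop (𝓝 1) := by
      have heq : ∀ n, dist (y (σ n)) p / r (σ n) = 1 := fun n => div_self (hRpos n).ne'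
      simp only [heq]
      exact tendsto_const_nhds
    refine H2 (fun n => x (σ n)) (fun n => y (σ n)) ?_ ?_ ?_ ?_ ?_ ⟨S, hSc⟩
    · refine ⟨?_, T, hTc⟩
      refine tendsto_atTop_mono (fun n => ?_) hcast
      exact (hbnd n).trans (hxlb _)
    · refine ⟨?_, 1, hYone⟩
      refine tendsto_atTop_mono (fun n => ?_) hcast
      exact (hbnd n).trans (hylb _)
    · intro hmem
      exact hTpos.ne' (tendsto_nhds_unique hTc hmem.2)
    · intro hmem
      exact one_ne_zero (tendsto_nhds_unique hYone hmem.2)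
    · intro heq
      exact hSpos.ne' (tendsto_nhds_unique hSc heq)
  · -- (ii) → (i)
    intro hF2 r hr
    have key : ∀ x : ℕ → X, SeqAdm dist p r x → x ∉ alphaZero dist p r →
        ∃ L, 0 < L ∧ Tendsto (fun n => dist (x n) p / r n) atTop (𝓝 L) := by
      intro x hx hnx
      obtain ⟨L, hL⟩ := hx.2
      refine ⟨L, ?_, hL⟩
      rcases lt_or_eq_of_le (ge_of_tendsto' hL fun n => div_nonneg dist_nonneg (hr.1 n).le)
        with h | h
      · exact h
      · exact absurd ⟨hx, h.symm ▸ hL⟩ hnx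
    constructor
    · intro x hx hnx z hz
      obtain ⟨L, hLpos, hL⟩ := key x hx hnx
      have hdiff : Tendsto (fun n => dist (x n) (z n) / r n - dist (x n) p / r n)
          atTop (𝓝 0) := by
        refine squeeze_zero_norm (fun n => ?_) hz.2
        calc ‖dist (x n) (z n) / r n - dist (x n) p / r n‖
            = |dist (z n) (x n) - dist p (x n)| / r n := by
              rw [Real.norm_eq_abs, ← sub_div, abs_div, abs_of_pos (hr.1 n),
                dist_comm (x n) (z n), dist_comm (x n) p]
          _ ≤ dist (z n) p / r n :=
              (div_le_div_iff_of_pos_right (hr.1 n)).mpr (abs_dist_sub_le _ _ _)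
      have hxz : Tendsto (fun n => dist (x n) (z n) / r n) atTop (𝓝 L) := by
        have := hdiff.add hL
        simpa using this
      exact ⟨⟨L, hxz⟩, fun heq => hLpos.ne' (tendsto_nhds_unique hxz heq)⟩
    · intro x y hx hy hnx hny hne
      rintro ⟨c, hc⟩
      obtain ⟨A, hApos, hA⟩ := key x hx hnx
      obtain ⟨B, hBpos, hB⟩ := key y hy hny
      have hc0 : 0 ≤ c := ge_of_tendsto' hc fun n => div_nonneg dist_nonneg (hr.1 n).le
      have hcne : c ≠ 0 := fun h => hne (by rw [h] at hc; exact hc)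
      have hcpos : 0 < c := hc0.lt_of_ne (Ne.symm hcne)
      have hmaxpos : 0 < max A B := lt_max_of_lt_left hApos
      set ℓ : ℝ := min A B * c / max A B ^ 2 with hldef
      have hlpos : 0 < ℓ := div_pos (mul_pos (lt_min hApos hBpos) hcpos) (pow_pos hmaxpos 2)
      have hbase : Tendsto (fun n => (min (dist (x n) p / r n) (dist (y n) p / r n) *
          (dist (x n) (y n) / r n)) / (max (dist (x n) p / r n) (dist (y n) p / r n)) ^ 2)
          atTop (𝓝 ℓ) :=
        ((hA.min hB).mul hc).div ((hA.max hB).pow 2) (pow_pos hmaxpos 2).ne'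
      have hev : ∀ᶠ n in atTop, F2 p (x n) (y n) =
          (min (dist (x n) p / r n) (dist (y n) p / r n) * (dist (x n) (y n) / r n)) /
            (max (dist (x n) p / r n) (dist (y n) p / r n)) ^ 2 := by
        filter_upwards [hx.1.eventually_ge_atTop 1] with n hn
        have hxpn : x n ≠ p := by
          intro h; rw [h, dist_self] at hn; linarith
        have hr0 : (0:ℝ) < r n := hr.1 n
        have hmx : 0 < max (dist (x n) p) (dist (y n) p) := lt_max_of_lt_left (by linarith)
        unfold F2
        rw [if_neg (fun h => hxpn h.1), min_div_div_right hr0.le, max_div_div_right hr0.le]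
        rw [div_mul_div_comm, div_pow, div_div_eq_mul_div, ← pow_two,
          div_mul_cancel₀ _ (pow_ne_zero 2 hr0.ne')]
      have hconv : Tendsto (fun n => F2 p (x n) (y n)) atTop (𝓝 ℓ) :=
        Tendsto.congr' (hev.mono fun n h => h.symm) hbase
      obtain ⟨M, hM⟩ := hF2 (ℓ/2) (by linarith)
      have h1 : ∀ᶠ n in atTop, F2 p (x n) (y n) < ℓ/2 := by
        filter_upwards [hx.1.eventually_ge_atTop M, hy.1.eventually_ge_atTop M] with n hn1 hn2
        exact hM _ _ hn1 hn2
      have h2 : ∀ᶠ n in atTop, ℓ/2 < F2 p (x n) (y n) :=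
        hconv.eventually (eventually_gt_nhds (by linarith))
      obtain ⟨n, hn1, hn2⟩ := (h1.and h2).exists
      linarith
end

section
/- There exists a set E ⊆ ℝ⁺ which is strongly porous at infinity but not completely strongly porous at infinity. -/
open Filter Topology

/-- `l(∞,h,E)`: the length of the longest interval contained in `[0,h] \ E`. -/
noncomputable def gapLen (E : Set ℝ) (h : ℝ) : ℝ :=
  sSup {d : ℝ | ∃ a b : ℝ, a ≤ b ∧ d = b - a ∧ Set.Ioo a b ⊆ Set.Icc 0 h \ E}

/-- The porosity of `E ⊆ ℝ⁺` at infinity: `p(E,∞) = limsup_{h→∞} l(∞,h,E)/h`. -/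
noncomputable def porosityAtInfty (E : Set ℝ) : ℝ :=
  Filter.limsup (fun h => gapLen E h / h) atTop

/-- `E` is strongly porous at infinity if `p(E,∞) = 1`. -/
def StronglyPorousAtInfty (E : Set ℝ) : Prop :=
  porosityAtInfty E = 1

/-- A sequence of reals is eventually increasing if `τ_{n+1} ≥ τ_n` for all
sufficiently large `n`. -/
def EventuallyIncr (τ : ℕ → ℝ) : Prop :=
  ∃ N : ℕ, ∀ n ≥ N, τ n ≤ τ (n + 1)

/-- `τ̃ ∈ Ẽ^i_∞`: an eventually increasing sequence in `E` tending to infinity. -/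
def MemEInfty (E : Set ℝ) (τ : ℕ → ℝ) : Prop :=
  (∀ n, τ n ∈ E) ∧ EventuallyIncr τ ∧ Tendsto τ atTop atTop

/-- `(a,b)` is a connected component of `Int(ℝ⁺ \ E)`. -/
def IsGapComponent (E : Set ℝ) (a b : ℝ) : Prop :=
  a < b ∧ Set.Ioo a b ⊆ interior (Set.Ici (0:ℝ) \ E) ∧
  a ∉ interior (Set.Ici (0:ℝ) \ E) ∧ b ∉ interior (Set.Ici (0:ℝ) \ E)

/-- `((aₙ,bₙ)) ∈ Ĩ^i_E`: every `(aₙ,bₙ)` is a connected component of `Int(ℝ⁺ \ E)`,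
`(aₙ)` is eventually increasing, `aₙ → ∞` and `(bₙ-aₙ)/bₙ → 1`. -/
def MemIEi (E : Set ℝ) (a b : ℕ → ℝ) : Prop :=
  (∀ n, IsGapComponent E (a n) (b n)) ∧ EventuallyIncr a ∧
  Tendsto a atTop atTop ∧ Tendsto (fun n => (b n - a n) / b n) atTop (𝓝 1)

/-- `ã ≍ γ̃`: there are constants `c₁, c₂ > 0` with `c₁ aₙ < γₙ < c₂ aₙ` for all `n`. -/
def BiComparable (a γ : ℕ → ℝ) : Prop :=
  ∃ c₁ c₂ : ℝ, 0 < c₁ ∧ 0 < c₂ ∧ ∀ n, c₁ * a n < γ n ∧ γ n < c₂ * a n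

/-- `E` is `τ̃`-strongly porous at infinity if there is `((aₙ,bₙ)) ∈ Ĩ^i_E` with
`τ̃ ≍ ã`. -/
def TauStronglyPorousAtInfty (E : Set ℝ) (τ : ℕ → ℝ) : Prop :=
  ∃ a b : ℕ → ℝ, MemIEi E a b ∧ BiComparable τ a

/-- `E` is completely strongly porous at infinity if it is `τ̃`-strongly porous at
infinity for every `τ̃ ∈ Ẽ^i_∞`. -/
def CompletelyStronglyPorousAtInfty (E : Set ℝ) : Prop :=
  ∀ τ : ℕ → ℝ, MemEInfty E τ → TauStronglyPorousAtInfty E τ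

/-- `E` is `ω`-strongly porous at infinity if every `τ̃ ∈ Ẽ^i_∞` has a subsequence
`τ̃'` for which `E` is `τ̃'`-strongly porous at infinity. -/
def OmegaStronglyPorousAtInfty (E : Set ℝ) : Prop :=
  ∀ τ : ℕ → ℝ, MemEInfty E τ →
    ∃ φ : ℕ → ℕ, StrictMono φ ∧ TauStronglyPorousAtInfty E (τ ∘ φ)

/-! ### Auxiliary construction -/

/-- The counterexample set: a union of intervals `[2^(4·4^k), 2^(8·4^k)]`. -/
def PorSet : Set ℝ := ⋃ k : ℕ, Set.Icc ((2:ℝ)^(4*4^k)) ((2:ℝ)^(8*4^k))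

lemma two_pow_mono {i j : ℕ} (h : i ≤ j) : (2:ℝ)^i ≤ 2^j :=
  pow_le_pow_right₀ one_le_two h

lemma gapSet_ub {E : Set ℝ} {h : ℝ} (hh : 0 ≤ h) :
    ∀ d ∈ {d : ℝ | ∃ a b : ℝ, a ≤ b ∧ d = b - a ∧ Set.Ioo a b ⊆ Set.Icc 0 h \ E},
      d ≤ h := by
  rintro d ⟨a, b, hab, rfl, hsub⟩
  rcases eq_or_lt_of_le hab with rfl | hlt
  · simpa using hh
  · have h1 : Set.Icc a b ⊆ Set.Icc 0 h := by
      rw [← closure_Ioo hlt.ne]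
      exact closure_minimal (fun x hx => (hsub hx).1) isClosed_Icc
    have ha := (h1 (Set.left_mem_Icc.2 hab)).1
    have hb := (h1 (Set.right_mem_Icc.2 hab)).2
    linarith

lemma zero_mem_gapSet (E : Set ℝ) (h : ℝ) :
    (0:ℝ) ∈ {d : ℝ | ∃ a b : ℝ, a ≤ b ∧ d = b - a ∧ Set.Ioo a b ⊆ Set.Icc 0 h \ E} :=
  ⟨0, 0, le_rfl, by norm_num, by simp⟩

lemma gapLen_le {E : Set ℝ} {h : ℝ} (hh : 0 ≤ h) : gapLen E h ≤ h :=
  Real.sSup_le (gapSet_ub hh) hh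

lemma gapLen_nonneg {E : Set ℝ} {h : ℝ} (hh : 0 ≤ h) : 0 ≤ gapLen E h :=
  le_csSup ⟨h, gapSet_ub hh⟩ (zero_mem_gapSet E h)

lemma gapLen_ge {E : Set ℝ} {a h : ℝ} (hh : 0 ≤ h) (hab : a ≤ h)
    (hsub : Set.Ioo a h ⊆ Set.Icc 0 h \ E) : h - a ≤ gapLen E h :=
  le_csSup ⟨h, gapSet_ub hh⟩ ⟨a, h, hab, rfl, hsub⟩

lemma gap_disjoint (k : ℕ) :
    Set.Ioo ((2:ℝ)^(8*4^k)) ((2:ℝ)^(4*4^(k+1))) ⊆ PorSetᶜ := by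
  rintro x ⟨hx1, hx2⟩ hx
  obtain ⟨j, hj⟩ := Set.mem_iUnion.1 hx
  rcases le_or_gt j k with hjk | hjk
  · have : (2:ℝ)^(8*4^j) ≤ 2^(8*4^k) :=
      two_pow_mono (Nat.mul_le_mul_left 8 (Nat.pow_le_pow_right (by norm_num) hjk))
    have := hj.2.trans this
    linarith
  · have : (2:ℝ)^(4*4^(k+1)) ≤ 2^(4*4^j) :=
      two_pow_mono (Nat.mul_le_mul_left 4 (Nat.pow_le_pow_right (by norm_num) hjk))
    have := this.trans hj.1
    linarith

lemma exists_window {x : ℝ} (hx : (16:ℝ) ≤ x) :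
    ∃ k : ℕ, (2:ℝ)^(4*4^k) ≤ x ∧ x < 2^(4*4^(k+1)) := by
  have hex : ∃ m : ℕ, x < 2^(4*4^m) := by
    obtain ⟨m, hm⟩ := pow_unbounded_of_one_lt x (one_lt_two (α := ℝ))
    refine ⟨m, hm.trans_le (two_pow_mono ?_)⟩
    calc m ≤ 4^m := (Nat.lt_pow_self (by norm_num : 1 < 4)).le
      _ ≤ 4*4^m := Nat.le_mul_of_pos_left _ (by norm_num)
  classical
  have hN : x < 2^(4*4^(Nat.find hex)) := Nat.find_spec hex
  have hN0 : Nat.find hex ≠ 0 := by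
    intro h0
    rw [h0] at hN
    norm_num at hN
    linarith
  obtain ⟨k, hk⟩ := Nat.exists_eq_succ_of_ne_zero hN0
  have hmin : ¬ x < 2^(4*4^k) := Nat.find_min hex (by omega)
  have hk' : Nat.find hex = k + 1 := hk
  rw [hk'] at hN
  exact ⟨k, not_lt.1 hmin, hN⟩

/-- There exists a set `E ⊆ ℝ⁺` which is strongly porous at infinity
but not completely strongly porous at infinity. -/
theorem exists_stronglyPorous_not_completelyStronglyPorous :
    ∃ E : Set ℝ, E ⊆ Set.Ici 0 ∧ StronglyPorousAtInfty E ∧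
      ¬ CompletelyStronglyPorousAtInfty E := by
  refine ⟨PorSet, ?_, ?_, ?_⟩
  · -- PorSet ⊆ [0, ∞)
    rintro x hx
    obtain ⟨j, hj⟩ := Set.mem_iUnion.1 hx
    have : (0:ℝ) < 2^(4*4^j) := by positivity
    exact le_of_lt (this.trans_le hj.1)
  · -- strongly porous at infinity
    unfold StronglyPorousAtInfty porosityAtInfty
    set f : ℝ → ℝ := fun h => gapLen PorSet h / h with hf
    have hble : ∀ᶠ h in atTop, f h ≤ 1 := by
      filter_upwards [eventually_ge_atTop (1:ℝ)] with h hh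
      rw [hf]
      have := gapLen_le (E := PorSet) (h := h) (by linarith)
      rw [div_le_one (by linarith)]
      exact this
    have hb0 : ∀ᶠ h in atTop, (0:ℝ) ≤ f h := by
      filter_upwards [eventually_ge_atTop (1:ℝ)] with h hh
      exact div_nonneg (gapLen_nonneg (by linarith)) (by linarith)
    have hbdd : IsBoundedUnder (· ≤ ·) atTop f := isBoundedUnder_of_eventually_le hble
    have hcob : IsCoboundedUnder (· ≤ ·) atTop f :=
      (isBoundedUnder_of_eventually_ge hb0).isCoboundedUnder_le
    refine le_antisymm (limsup_le_of_le hcob hble) ?_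
    by_contra hlt
    push_neg at hlt
    set L := limsup f atTop with hL
    set ε := (1 - L)/2 with hε
    have hεpos : 0 < ε := by rw [hε]; linarith
    have hfreq : ∃ᶠ h in atTop, 1 - ε ≤ f h := by
      rw [frequently_atTop]
      intro M
      obtain ⟨k, hk⟩ := pow_unbounded_of_one_lt (max M (2/ε)) (one_lt_two (α := ℝ))
      set h : ℝ := 2^(4*4^(k+1)) with hh
      have hkh : (2:ℝ)^k ≤ h := by
        refine two_pow_mono ?_
        calc k ≤ 4^k := (Nat.lt_pow_self (by norm_num : 1 < 4)).le
          _ ≤ 4*4^(k+1) := by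
            have : (4:ℕ)^k ≤ 4^(k+1) := Nat.pow_le_pow_right (by norm_num) (by omega)
            omega
      have hMh : M ≤ h := le_trans (le_trans (le_max_left _ _) hk.le) hkh
      refine ⟨h, hMh, ?_⟩
      set g : ℝ := 2^(8*4^k) with hg
      have hgpos : (0:ℝ) < g := by positivity
      have hhpos : (0:ℝ) < h := by positivity
      have hgh : g ≤ h := two_pow_mono (by
        have : (8:ℕ)*4^k ≤ 16*4^k := by omega
        calc 8*4^k ≤ 16*4^k := this
          _ = 4*4^(k+1) := by ring)
      have hsub : Set.Ioo g h ⊆ Set.Icc 0 h \ PorSet := by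
        rintro x ⟨hx1, hx2⟩
        exact ⟨⟨le_of_lt (hgpos.trans hx1), hx2.le⟩, gap_disjoint k ⟨hx1, hx2⟩⟩
      have hgl : h - g ≤ gapLen PorSet h := gapLen_ge hhpos.le hgh hsub
      -- g / h ≤ ε
      have h2ε : 2/ε ≤ (2:ℝ)^k := le_trans (le_max_right _ _) hk.le
      have hgε : g / h ≤ ε := by
        rw [div_le_iff₀ hhpos]
        have h1 : g * ((2:ℝ)^k) ≤ h := by
          rw [hg, hh, ← pow_add]
          refine two_pow_mono ?_
          have heq : (4:ℕ)*4^(k+1) = 16*4^k := by ring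
          rw [heq]
          have hk4 : k ≤ 4^k := (Nat.lt_pow_self (by norm_num : 1 < 4)).le
          omega
        have h2 : g * (2/ε) ≤ g * 2^k :=
          mul_le_mul_of_nonneg_left h2ε hgpos.le
        have h3 : g * (2/ε) ≤ h := h2.trans h1
        have h4 := mul_le_mul_of_nonneg_right h3 hεpos.le
        have h5 : g * (2/ε) * ε = 2 * g := by
          field_simp
        rw [h5] at h4
        linarith
      have hge : g ≤ ε * h := (div_le_iff₀ hhpos).1 hgε
      have : 1 - ε ≤ (h - g)/h := by
        rw [le_div_iff₀ hhpos]
        nlinarith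
      calc 1 - ε ≤ (h - g)/h := this
        _ ≤ gapLen PorSet h / h := (div_le_div_iff_of_pos_right hhpos).2 hgl
        _ = f h := rfl
    have hlim := le_limsup_of_frequently_le hfreq hbdd
    rw [← hL] at hlim
    rw [hε] at hlim
    linarith
  · -- not completely strongly porous
    intro hC
    set τ : ℕ → ℝ := fun n => 2^(6*4^n) with hτ
    have hτmem : MemEInfty PorSet τ := by
      refine ⟨?_, ⟨0, ?_⟩, ?_⟩
      · intro n
        refine Set.mem_iUnion.2 ⟨n, ?_, ?_⟩
        · exact two_pow_mono (Nat.mul_le_mul_right _ (by norm_num))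
        · exact two_pow_mono (Nat.mul_le_mul_right _ (by norm_num))
      · intro n _
        refine two_pow_mono (Nat.mul_le_mul_left 6 (Nat.pow_le_pow_right (by norm_num) (by omega)))
      · refine tendsto_atTop_mono (fun n => ?_)
          (tendsto_pow_atTop_atTop_of_one_lt (one_lt_two (α := ℝ)))
        refine two_pow_mono ?_
        calc n ≤ 4^n := (Nat.lt_pow_self (by norm_num : 1 < 4)).le
          _ ≤ 6*4^n := Nat.le_mul_of_pos_left _ (by norm_num)
    obtain ⟨a, b, ⟨hcomp, _, _, _⟩, c1, c2, hc1, hc2, hcmp⟩ := hC τ hτmem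
    -- pick a large n
    obtain ⟨n, hn⟩ := pow_unbounded_of_one_lt (max (16/c1) (max c2 (1/c1)))
      (one_lt_two (α := ℝ))
    have h2n : (2:ℝ)^n ≤ 2^(2*4^n) := two_pow_mono (by
      calc n ≤ 4^n := (Nat.lt_pow_self (by norm_num : 1 < 4)).le
        _ ≤ 2*4^n := Nat.le_mul_of_pos_left _ (by norm_num))
    have hpos2 : (0:ℝ) < 2^(2*4^n) := by positivity
    have hpos6 : (0:ℝ) < 2^(6*4^n) := by positivity
    have hB : c2 < (2:ℝ)^(2*4^n) :=
      lt_of_le_of_lt (le_trans (le_max_left _ _) (le_max_right _ _)) (hn.trans_le h2n)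
    have hCc : 1 < c1 * (2:ℝ)^(2*4^n) := by
      have : 1/c1 < (2:ℝ)^(2*4^n) :=
        lt_of_le_of_lt (le_trans (le_max_right _ _) (le_max_right _ _)) (hn.trans_le h2n)
      rw [div_lt_iff₀ hc1] at this
      linarith [this]
    have hA : (16:ℝ) ≤ c1 * 2^(6*4^n) := by
      have h1 : 16/c1 < (2:ℝ)^n := lt_of_le_of_lt (le_max_left _ _) hn
      have h2 : (2:ℝ)^n ≤ 2^(6*4^n) := two_pow_mono (by
        calc n ≤ 4^n := (Nat.lt_pow_self (by norm_num : 1 < 4)).le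
          _ ≤ 6*4^n := Nat.le_mul_of_pos_left _ (by norm_num))
      have := h1.trans_le h2
      rw [div_lt_iff₀ hc1] at this
      linarith
    obtain ⟨hlt1, hlt2⟩ := hcmp n
    have hτn : τ n = (2:ℝ)^(6*4^n) := rfl
    have ha16 : (16:ℝ) ≤ a n := by
      rw [hτn] at hlt1
      linarith
    obtain ⟨k, hk1, hk2⟩ := exists_window ha16
    obtain ⟨habn, hgap, -, -⟩ := hcomp n
    -- the interval (a n, b n) avoids PorSet
    have hgap' : Set.Ioo (a n) (b n) ⊆ PorSetᶜ := fun x hx =>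
      fun hxE => ((interior_subset (hgap hx)).2 hxE)
    -- a n is at least the right endpoint of the k-th block
    have hak : (2:ℝ)^(8*4^k) ≤ a n := by
      by_contra hcon
      push_neg at hcon
      set y := min (b n) ((2:ℝ)^(8*4^k)) with hy
      have hay : a n < y := lt_min habn hcon
      set z := (a n + y)/2 with hz
      have hz1 : a n < z := by rw [hz]; linarith
      have hz2 : z < y := by rw [hz]; linarith
      have hzE : z ∈ PorSet := Set.mem_iUnion.2 ⟨k,
        le_trans hk1 hz1.le, (hz2.trans_le (min_le_right _ _)).le⟩
      exact hgap' ⟨hz1, hz2.trans_le (min_le_left _ _)⟩ hzE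
    rcases le_or_gt n k with hkn | hkn
    · -- n ≤ k : a n is too big
      have h1 : (2:ℝ)^(8*4^n) ≤ 2^(8*4^k) :=
        two_pow_mono (Nat.mul_le_mul_left 8 (Nat.pow_le_pow_right (by norm_num) hkn))
      have h2 : (2:ℝ)^(8*4^n) < c2 * 2^(6*4^n) := by
        rw [hτn] at hlt2
        linarith
      have h3 : (2:ℝ)^(8*4^n) = 2^(2*4^n) * 2^(6*4^n) := by
        rw [← pow_add]
        congr 1
        ring
      rw [h3] at h2
      have := lt_of_mul_lt_mul_right h2 hpos6.le
      linarith
    · -- k < n : a n is too small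
      have hk1n : k + 1 ≤ n := hkn
      have h1 : (2:ℝ)^(4*4^(k+1)) ≤ 2^(4*4^n) :=
        two_pow_mono (Nat.mul_le_mul_left 4 (Nat.pow_le_pow_right (by norm_num) hk1n))
      have h2 : c1 * (2:ℝ)^(6*4^n) < 2^(4*4^n) := by
        rw [hτn] at hlt1
        linarith [hk2.trans_le h1]
      have h3 : (2:ℝ)^(6*4^n) = 2^(2*4^n) * 2^(4*4^n) := by
        rw [← pow_add]
        congr 1
        ring
      rw [h3, ← mul_assoc] at h2
      have hpos4 : (0:ℝ) < 2^(4*4^n) := by positivity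
      have h2' : c1 * 2^(2*4^n) * 2^(4*4^n) < 1 * 2^(4*4^n) := by linarith
      have := lt_of_mul_lt_mul_right h2' hpos4.le
      linarith
end

section
/- Let (X,d) be an unbounded metric space and p ∈ X. If the family 𝔉_n(X) of all pretangent spaces with normal scaling sequences is uniformly bounded, then every pretangent space Ω_{∞,r̃}^X (for an arbitrary scaling sequence r̃) is bounded. -/
open Filter Topology

/-- A scaling sequence `r̃` is normal if it is eventually increasing and there is
`x̃ ∈ X̃_{∞,r̃}` with `lim d(xₙ,p)/rₙ = 1`. -/
def NormalScaling {Y : Type*} (d : Y → Y → ℝ) (p : Y) (r : ℕ → ℝ) : Prop :=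
  ScalingSeq r ∧ EventuallyIncr r ∧
  ∃ x : ℕ → Y, SeqAdm d p r x ∧ Tendsto (fun n => d (x n) p / r n) atTop (𝓝 1)

section AuxLemmas
variable {X : Type*} [MetricSpace X]

lemma seqEquiv_symm' {s : ℕ → ℝ} {u v : ℕ → X} (h : SeqEquiv dist s u v) :
    SeqEquiv dist s v u := by
  unfold SeqEquiv at *
  simpa [dist_comm] using h

lemma seqEquiv_trans' {s : ℕ → ℝ} (hs : ∀ n, 0 < s n) {u v w : ℕ → X}
    (h1 : SeqEquiv dist s u v) (h2 : SeqEquiv dist s v w) :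
    SeqEquiv dist s u w := by
  unfold SeqEquiv at *
  have hsum := h1.add h2
  rw [add_zero] at hsum
  refine squeeze_zero (fun n => div_nonneg dist_nonneg (hs n).le) (fun n => ?_) hsum
  rw [← add_div]
  exact div_le_div_of_nonneg_right (dist_triangle (u n) (v n) (w n)) (hs n).le

/-- If `z ≡ x'` and `u ≡ w'` then `d(z,u)/s` has the same limit as `d(x',w')/s`. -/
lemma tendsto_of_equiv {s : ℕ → ℝ} (hs : ∀ n, 0 < s n) {z u x' w' : ℕ → X} {L : ℝ}
    (hz : SeqEquiv dist s z x') (hu : SeqEquiv dist s u w')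
    (hL : Tendsto (fun n => dist (x' n) (w' n) / s n) atTop (𝓝 L)) :
    Tendsto (fun n => dist (z n) (u n) / s n) atTop (𝓝 L) := by
  have hdiff : Tendsto (fun n => dist (z n) (u n) / s n - dist (x' n) (w' n) / s n)
      atTop (𝓝 0) := by
    have hsum := hz.add hu
    rw [add_zero] at hsum
    refine squeeze_zero_norm (fun n => ?_) hsum
    have h1 : |dist (z n) (u n) - dist (x' n) (w' n)| ≤
        dist (z n) (x' n) + dist (u n) (w' n) := by
      have := dist_dist_dist_le (z n) (u n) (x' n) (w' n)
      simpa [Real.dist_eq] using this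
    have hsn := hs n
    rw [div_sub_div_same] at *
    calc ‖(dist (z n) (u n) - dist (x' n) (w' n)) / s n‖
        = |dist (z n) (u n) - dist (x' n) (w' n)| / s n := by
          rw [Real.norm_eq_abs, abs_div, abs_of_pos hsn]
      _ ≤ (dist (z n) (x' n) + dist (u n) (w' n)) / s n :=
          div_le_div_of_nonneg_right h1 hsn.le
      _ = dist (z n) (x' n) / s n + dist (u n) (w' n) / s n := add_div _ _ _
  have := hdiff.add hL
  rw [zero_add] at this
  simpa using this

end AuxLemmas

/-- If the family `𝔉ₙ(X)` of all pretangent spaces with normal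
scaling sequences is uniformly bounded, then every pretangent space `Ω^X_{∞,r̃}` (for
an arbitrary scaling sequence `r̃`) is bounded. -/
theorem bounded_pretangent_of_uniformly_bounded {X : Type*} [MetricSpace X]
    (hX : ¬ Bornology.IsBounded (Set.univ : Set X)) (p : X)
    (hub : ∃ M : ℝ, ∀ r : ℕ → ℝ, NormalScaling dist p r →
      ∀ C : Set (ℕ → X), IsPretangent dist p r C →
        ∀ x ∈ C, ∀ y ∈ C, seqDist dist r x y ≤ M) :
    ∀ r : ℕ → ℝ, ScalingSeq r → ∀ C : Set (ℕ → X), IsPretangent dist p r C →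
      ∃ M : ℝ, ∀ x ∈ C, ∀ y ∈ C, seqDist dist r x y ≤ M := by
  obtain ⟨M, hM⟩ := hub
  intro r hr C hC
  by_contra hbd
  push_neg at hbd
  -- For every `t` there is a member of `C` whose normalized distance to `p` exceeds `t`.
  have key : ∀ t : ℝ, ∃ x ∈ C, ∃ L : ℝ,
      Tendsto (fun n => dist (x n) p / r n) atTop (𝓝 L) ∧ t < L := by
    intro t
    obtain ⟨u, hu, v, hv, hgt⟩ := hbd (2 * t)
    obtain ⟨L, hL⟩ := hC.1.2.2 u hu v hv
    rw [seqDist, hL.limUnder_eq] at hgt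
    obtain ⟨Lu, hLu⟩ := (hC.1.1 u hu).2
    obtain ⟨Lv, hLv⟩ := (hC.1.1 v hv).2
    have hle : L ≤ Lu + Lv := by
      refine le_of_tendsto_of_tendsto' hL (hLu.add hLv) (fun n => ?_)
      rw [← add_div]
      exact div_le_div_of_nonneg_right (dist_triangle_right _ _ _) (hr.1 n).le
    rcases le_or_gt Lu t with h | h
    · exact ⟨v, hv, Lv, hLv, by linarith⟩
    · exact ⟨u, hu, Lu, hLu, h⟩
  -- pick x with limit a > 1 and w with limit b > (max M 0 + 1) * a
  obtain ⟨x, hxC, a, ha, ha1⟩ := key 1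
  have ha0 : (0:ℝ) < a := by linarith
  obtain ⟨w, hwC, b, hb, hbgt⟩ := key ((max M 0 + 1) * a)
  obtain ⟨c, hc⟩ := hC.1.2.2 x hxC w hwC
  have hca : b - a ≤ c := by
    refine le_of_tendsto_of_tendsto' (hb.sub ha) hc (fun n => ?_)
    rw [div_sub_div_same]
    refine div_le_div_of_nonneg_right ?_ (hr.1 n).le
    have h1 := dist_triangle (w n) (x n) p
    have h2 : dist (w n) (x n) = dist (x n) (w n) := dist_comm _ _
    linarith
  have hcM : M < c / a := by
    rw [lt_div_iff₀ ha0]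
    have : max M 0 * a ≤ c := by nlinarith [le_max_left M 0]
    nlinarith [le_max_left M (0:ℝ), le_max_right M (0:ℝ)]
  -- construct the subsequence φ making q ∘ φ strictly increasing
  set q : ℕ → ℝ := fun n => dist (x n) p with hq
  have hqtop : Tendsto q atTop atTop := (hC.1.1 x hxC).1
  have H : ∀ (m : ℕ) (bb : ℝ), ∃ N, m ≤ N ∧ bb ≤ q N := by
    intro m bb
    obtain ⟨N, h1, h2⟩ := ((hqtop.eventually_ge_atTop bb).and (eventually_ge_atTop m)).exists
    exact ⟨N, h2, h1⟩
  let φ : ℕ → ℕ := fun k =>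
    Nat.rec (H 0 1).choose (fun _ prev => (H (prev + 1) (q prev + 1)).choose) k
  have hφ0 : 1 ≤ q (φ 0) := (H 0 1).choose_spec.2
  have hφstep : ∀ k, φ k + 1 ≤ φ (k + 1) ∧ q (φ k) + 1 ≤ q (φ (k + 1)) := by
    intro k
    exact (H (φ k + 1) (q (φ k) + 1)).choose_spec
  have hφmono : StrictMono φ := strictMono_nat_of_lt_succ (fun k => (hφstep k).1)
  have hφtop : Tendsto φ atTop atTop := hφmono.tendsto_atTop
  set s : ℕ → ℝ := fun n => q (φ n) with hsdef
  have hs1 : ∀ n, 1 ≤ s n := by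
    intro n
    induction n with
    | zero => exact hφ0
    | succ k ih => have := (hφstep k).2; simp only [hsdef] at *; linarith
  have hspos : ∀ n, 0 < s n := fun n => lt_of_lt_of_le one_pos (hs1 n)
  have hsn : ∀ n : ℕ, (n : ℝ) ≤ s n := by
    intro n
    induction n with
    | zero => simpa using (le_trans zero_le_one (hs1 0))
    | succ k ih => have := (hφstep k).2; push_cast; simp only [hsdef] at *; linarith
  have hstop : Tendsto s atTop atTop :=
    tendsto_atTop_mono hsn tendsto_natCast_atTop_atTop
  set x' : ℕ → X := fun n => x (φ n) with hx'def
  set w' : ℕ → X := fun n => w (φ n) with hw'def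
  have hx'top : Tendsto (fun n => dist (x' n) p) atTop atTop := hstop
  have hx'ratio : Tendsto (fun n => dist (x' n) p / s n) atTop (𝓝 1) := by
    have : (fun n => dist (x' n) p / s n) = fun n => (1:ℝ) := by
      funext n; exact div_self (hspos n).ne'
    rw [this]; exact tendsto_const_nhds
  -- ratios along the subsequence
  have ratio_lemma : ∀ (f : ℕ → ℝ) (L : ℝ),
      Tendsto (fun m => f m / r m) atTop (𝓝 L) →
      Tendsto (fun n => f (φ n) / s n) atTop (𝓝 (L / a)) := by
    intro f L hf
    have hdiv : Tendsto (fun m => (f m / r m) / (q m / r m)) atTop (𝓝 (L / a)) :=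
      hf.div ha ha0.ne'
    have heq : (fun m => (f m / r m) / (q m / r m)) = fun m => f m / q m := by
      funext m
      rcases eq_or_ne (q m) 0 with h | h
      · simp [h]
      · have hrne : r m ≠ 0 := (hr.1 m).ne'
        field_simp
    rw [heq] at hdiv
    exact hdiv.comp hφtop
  have hw'ratio : Tendsto (fun n => dist (w' n) p / s n) atTop (𝓝 (b / a)) :=
    ratio_lemma (fun m => dist (w m) p) b hb
  have hxw'ratio : Tendsto (fun n => dist (x' n) (w' n) / s n) atTop (𝓝 (c / a)) :=
    ratio_lemma (fun m => dist (x m) (w m)) c hc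
  have hw'top : Tendsto (fun n => dist (w' n) p) atTop atTop :=
    ((hC.1.1 w hwC).1).comp hφtop
  -- s is a normal scaling
  have hsscal : ScalingSeq s := ⟨hspos, hstop⟩
  have hnormal : NormalScaling dist p s := by
    refine ⟨hsscal, ⟨0, fun n _ => ?_⟩, x', ⟨hx'top, 1, hx'ratio⟩, hx'ratio⟩
    have := (hφstep n).2
    simp only [hsdef] at *; linarith
  -- admissibility of x', w'
  have hx'adm : SeqAdm dist p s x' := ⟨hx'top, 1, hx'ratio⟩
  have hw'adm : SeqAdm dist p s w' := ⟨hw'top, b / a, hw'ratio⟩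
  have hrefl : ∀ z : ℕ → X, SeqEquiv dist s z z := by
    intro z
    have : (fun n => dist (z n) (z n) / s n) = fun _ => (0:ℝ) := by
      funext n; simp
    unfold SeqEquiv; rw [this]; exact tendsto_const_nhds
  -- the base clique C₀
  set C₀ : Set (ℕ → X) :=
    {z | SeqAdm dist p s z ∧ (SeqEquiv dist s z x' ∨ SeqEquiv dist s z w')} with hC₀def
  have hx'C₀ : x' ∈ C₀ := ⟨hx'adm, Or.inl (hrefl x')⟩
  have hw'C₀ : w' ∈ C₀ := ⟨hw'adm, Or.inr (hrefl w')⟩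
  have hstable : ∀ z ∈ C₀, ∀ u ∈ C₀, MutStable dist s z u := by
    rintro z ⟨hzadm, hz⟩ u ⟨huadm, hu⟩
    rcases hz with hz | hz <;> rcases hu with hu | hu
    · exact ⟨0, by
        have := seqEquiv_trans' hspos hz (seqEquiv_symm' hu); exact this⟩
    · exact ⟨c / a, tendsto_of_equiv hspos hz hu hxw'ratio⟩
    · refine ⟨c / a, ?_⟩
      have h := tendsto_of_equiv hspos hu hz hxw'ratio
      have : (fun n => dist (u n) (z n) / s n) = fun n => dist (z n) (u n) / s n := by
        funext n; rw [dist_comm]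
      rwa [this] at h
    · exact ⟨0, by
        have := seqEquiv_trans' hspos hz (seqEquiv_symm' hu); exact this⟩
  have hC₀clique : IsCliqueSet dist p s C₀ := by
    refine ⟨fun z hz => hz.1, ?_, hstable⟩
    rintro z ⟨hzadm, hz⟩ y hyadm hzy
    refine ⟨hyadm, ?_⟩
    have hyz := seqEquiv_symm' hzy
    rcases hz with hz | hz
    · exact Or.inl (seqEquiv_trans' hspos hyz hz)
    · exact Or.inr (seqEquiv_trans' hspos hyz hz)
  -- Zorn: extend C₀ to a maximal clique
  set S : Set (Set (ℕ → X)) := {D | IsCliqueSet dist p s D ∧ C₀ ⊆ D} with hSdef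
  have hzorn : ∀ ch ⊆ S, IsChain (· ⊆ ·) ch → ch.Nonempty →
      ∃ ub ∈ S, ∀ d ∈ ch, d ⊆ ub := by
    intro ch hchS hchain ⟨D₀, hD₀⟩
    refine ⟨⋃₀ ch, ⟨⟨?_, ?_, ?_⟩, ?_⟩, fun d hd => Set.subset_sUnion_of_mem hd⟩
    · rintro z ⟨D, hD, hzD⟩
      exact (hchS hD).1.1 z hzD
    · rintro z ⟨D, hD, hzD⟩ y hyadm hzy
      exact ⟨D, hD, (hchS hD).1.2.1 z hzD y hyadm hzy⟩
    · rintro z ⟨D₁, hD₁, hzD₁⟩ u ⟨D₂, hD₂, huD₂⟩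
      rcases hchain.total hD₁ hD₂ with h | h
      · exact (hchS hD₂).1.2.2 z (h hzD₁) u huD₂
      · exact (hchS hD₁).1.2.2 z hzD₁ u (h huD₂)
    · exact ((hchS hD₀).2).trans (Set.subset_sUnion_of_mem hD₀)
  obtain ⟨D, hC₀D, hDmax⟩ := zorn_subset_nonempty S hzorn C₀ ⟨hC₀clique, subset_rfl⟩
  have hDpret : IsPretangent dist p s D := by
    refine ⟨hDmax.1.1, fun E hE hDE => ?_⟩
    have hES : E ∈ S := ⟨hE, hC₀D.trans hDE⟩
    exact subset_antisymm (hDmax.2 hES hDE) hDE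
  have hfin := hM s hnormal D hDpret x' (hC₀D hx'C₀) w' (hC₀D hw'C₀)
  rw [seqDist, hxw'ratio.limUnder_eq] at hfin
  linarith
end

section
/- Let (X,d) be an unbounded metric space and p ∈ X. All pretangent spaces to X at infinity (over all scaling sequences r̃) are bounded if and only if the set S_p(X) is ω-strongly porous at infinity. -/
open Filter Topology

/-- From a real sequence tending to infinity, extract a subsequence along which it is
strictly increasing. -/
lemma exists_subseq_strictMono_comp {w : ℕ → ℝ} (hw : Tendsto w atTop atTop) :
    ∃ ψ : ℕ → ℕ, StrictMono ψ ∧ StrictMono (w ∘ ψ) := by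
  have key : ∀ m : ℕ, ∃ m' : ℕ, m < m' ∧ w m < w m' := by
    intro m
    have h1 : ∀ᶠ n in atTop, w m < w n := hw.eventually_gt_atTop (w m)
    have h2 : ∀ᶠ n in atTop, m < n := eventually_gt_atTop m
    obtain ⟨n, hn1, hn2⟩ := (h2.and h1).exists
    exact ⟨n, hn1, hn2⟩
  choose f hf1 hf2 using key
  refine ⟨fun n => f^[n] 0, ?_, ?_⟩
  · apply strictMono_nat_of_lt_succ
    intro n
    rw [Function.iterate_succ_apply']
    exact hf1 _
  · apply strictMono_nat_of_lt_succ
    intro n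
    simp only [Function.comp_apply, Function.iterate_succ_apply']
    exact hf2 _
/-- Given an interval `(u,v)` disjoint from `E` (with `0 ≤ u`), a point of `E` in `[0,u]`
and a point of `E` above `v`, produce a gap component of `Int(ℝ⁺ \ E)` containing `(u,v)`
with controlled endpoints. -/
lemma exists_gapComponent {E : Set ℝ} {u v t e : ℝ} (ht : t ∈ E) (hte : e ∈ E)
    (ht0 : 0 ≤ t) (htu : t ≤ u) (huv : u < v) (hve : v < e)
    (hdisj : ∀ x ∈ Set.Ioo u v, x ∉ E) :
    ∃ a b : ℝ, IsGapComponent E a b ∧ t ≤ a ∧ a ≤ u ∧ v ≤ b ∧ b ≤ e := by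
  set U := interior (Set.Ici (0:ℝ) \ E) with hU
  have hUopen : IsOpen U := isOpen_interior
  have hUE : ∀ x ∈ U, x ∉ E := fun x hx => (interior_subset hx).2
  have huvU : Set.Ioo u v ⊆ U := by
    have hsub : Set.Ioo u v ⊆ Set.Ici (0:ℝ) \ E := by
      intro x hx
      exact ⟨le_trans (le_trans ht0 htu) hx.1.le, hdisj x hx⟩
    exact isOpen_Ioo.subset_interior_iff.mpr hsub
  set A := Set.Icc 0 u ∩ Uᶜ with hA
  have hAne : A.Nonempty := ⟨t, ⟨ht0, htu⟩, fun h => hUE t h ht⟩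
  have hAcomp : IsCompact A := isCompact_Icc.inter_right hUopen.isClosed_compl
  set a := sSup A with ha
  have haA : a ∈ A := hAcomp.sSup_mem hAne
  have hta : t ≤ a := le_csSup hAcomp.bddAbove ⟨⟨ht0, htu⟩, fun h => hUE t h ht⟩
  have hau : a ≤ u := haA.1.2
  set B := Set.Ici v ∩ Uᶜ with hB
  have hBne : B.Nonempty := ⟨e, hve.le, fun h => hUE e h hte⟩
  have hBclosed : IsClosed B := isClosed_Ici.inter hUopen.isClosed_compl
  set b := sInf B with hb
  have hbB : b ∈ B := hBclosed.csInf_mem hBne ⟨v, fun x hx => hx.1⟩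
  have hbe : b ≤ e := csInf_le ⟨v, fun x hx => hx.1⟩ ⟨hve.le, fun h => hUE e h hte⟩
  have hvb : v ≤ b := hbB.1
  refine ⟨a, b, ⟨lt_of_le_of_lt hau (lt_of_lt_of_le huv hvb), ?_, haA.2, hbB.2⟩, hta, hau, hvb, hbe⟩
  intro x hx
  rcases le_or_gt x u with hxu | hxu
  · by_contra hxU
    have : x ∈ A := ⟨⟨le_trans (le_trans ht0 hta) hx.1.le, hxu⟩, hxU⟩
    exact absurd (le_csSup hAcomp.bddAbove this) (not_le.mpr hx.1)
  · rcases lt_or_ge x v with hxv | hxv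
    · exact huvU ⟨hxu, hxv⟩
    · by_contra hxU
      have : x ∈ B := ⟨hxv, hxU⟩
      exact absurd (csInf_le ⟨v, fun y hy => hy.1⟩ this) (not_le.mpr hx.2)

/-- Diagonal extraction: from a countable family of eventually bounded real sequences,
extract a common subsequence along which all of them converge. -/
lemma exists_subseq_forall_tendsto (g : ℕ → ℕ → ℝ)
    (hb : ∀ i, ∃ B : ℝ, ∀ᶠ n in atTop, |g i n| ≤ B) :
    ∃ φ : ℕ → ℕ, StrictMono φ ∧ ∀ i, ∃ L : ℝ, Tendsto (fun n => g i (φ n)) atTop (𝓝 L) := by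
  choose B0 hB using hb
  set B : ℕ → ℝ := fun i => max (B0 i) 0 with hBdef
  -- clamp
  set g' : ℕ → ℕ → ℝ := fun i n => max (-(B i)) (min (B i) (g i n)) with hg'
  have hBnn : ∀ i, 0 ≤ B i := fun i => le_max_right _ _
  have hg'mem : ∀ i n, g' i n ∈ Set.Icc (-(B i)) (B i) := by
    intro i n
    refine ⟨le_max_left _ _, ?_⟩
    apply max_le (by linarith [hBnn i]) (min_le_left _ _)
  have hg'eq : ∀ i, ∀ᶠ n in atTop, g' i n = g i n := by
    intro i
    filter_upwards [hB i] with n hn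
    rw [abs_le] at hn
    have h1 : |g i n| ≤ B i := le_trans (abs_le.mpr hn) (le_max_left _ _)
    rw [abs_le] at h1
    simp only [hg', min_eq_right h1.2]
    exact max_eq_right h1.1
  set x : ℕ → (ℕ → ℝ) := fun n i => g' i n with hx
  have hcomp : IsCompact (Set.univ.pi fun i : ℕ => Set.Icc (-(B i)) (B i)) :=
    isCompact_univ_pi fun i => isCompact_Icc
  have hxmem : ∀ n, x n ∈ Set.univ.pi fun i : ℕ => Set.Icc (-(B i)) (B i) := by
    intro n i _
    exact hg'mem i n
  obtain ⟨a, _, φ, hφ, hconv⟩ := hcomp.tendsto_subseq hxmem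
  refine ⟨φ, hφ, fun i => ⟨a i, ?_⟩⟩
  have h1 : Tendsto (fun n => g' i (φ n)) atTop (𝓝 (a i)) := by
    have := (tendsto_pi_nhds.mp hconv) i
    exact this
  refine h1.congr' ?_
  have : ∀ᶠ n in atTop, g' i (φ n) = g i (φ n) :=
    hφ.tendsto_atTop.eventually (hg'eq i)
  exact this

lemma unbounded_range_dist {X : Type*} [MetricSpace X]
    (hX : ¬ Bornology.IsBounded (Set.univ : Set X)) (p : X) (R : ℝ) :
    ∃ x : X, R < dist x p := by
  by_contra h
  push_neg at h
  exact hX ((Metric.isBounded_closedBall (x := p) (r := R)).subset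
    (fun x _ => Metric.mem_closedBall.mpr (h x)))

/-- Lemma L: if no subsequence of `τ` is strongly porous for `E`, then for every `c > 1`
there is `C > c` with `E ∩ [c τ_n, C τ_n]` eventually nonempty. -/
lemma lemmaL {X : Type*} [MetricSpace X] (hX : ¬ Bornology.IsBounded (Set.univ : Set X))
    (p : X) (τ : ℕ → ℝ)
    (hτE : ∀ n, τ n ∈ Set.range fun x : X => dist x p)
    (hτtop : Tendsto τ atTop atTop)
    (hpor : ∀ φ : ℕ → ℕ, StrictMono φ →
      ¬ TauStronglyPorousAtInfty (Set.range fun x : X => dist x p) (τ ∘ φ))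
    (c : ℝ) (hc : 1 < c) :
    ∃ C : ℝ, c < C ∧ ∀ᶠ n in atTop,
      ((Set.range fun x : X => dist x p) ∩ Set.Icc (c * τ n) (C * τ n)).Nonempty := by
  set E := Set.range fun x : X => dist x p with hE
  by_contra hcon
  push_neg at hcon
  -- recursion: build indices
  have step : ∀ (j : ℕ) (prev : ℕ), ∃ n, prev < n ∧ 1 ≤ τ n ∧
      ¬ (E ∩ Set.Icc (c * τ n) ((c + j + 1) * τ n)).Nonempty := by
    intro j prev
    have hfreq : ∃ᶠ n in atTop, ¬ (E ∩ Set.Icc (c * τ n) ((c + j + 1) * τ n)).Nonempty := by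
      have := hcon (c + j + 1) (by
        have : (0:ℝ) ≤ (j:ℝ) := Nat.cast_nonneg j
        linarith)
      exact this.mono fun n hn => Set.not_nonempty_iff_eq_empty.mpr hn
    have hev : ∀ᶠ n in atTop, prev < n ∧ 1 ≤ τ n :=
      (eventually_gt_atTop prev).and (hτtop.eventually_ge_atTop 1)
    obtain ⟨n, ⟨h1, h2⟩, h3⟩ := (hev.and_frequently hfreq).exists
    exact ⟨n, h1, h2, h3⟩
  choose f hf1 hf2 hf3 using step
  set ns : ℕ → ℕ := fun j => Nat.rec (f 0 0) (fun j prev => f (j+1) prev) j with hns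
  have hns0 : ns 0 = f 0 0 := rfl
  have hnss : ∀ j, ns (j+1) = f (j+1) (ns j) := fun j => rfl
  have hnsmono : StrictMono ns := strictMono_nat_of_lt_succ fun j => by
    rw [hnss]; exact hf1 _ _
  have hτ1 : ∀ j, 1 ≤ τ (ns j) := by
    intro j
    cases j with
    | zero => rw [hns0]; exact hf2 0 0
    | succ j => rw [hnss]; exact hf2 _ _
  have hemp : ∀ j, ¬ (E ∩ Set.Icc (c * τ (ns j)) ((c + j + 1) * τ (ns j))).Nonempty := by
    intro j
    cases j with
    | zero => rw [hns0]; simpa using hf3 0 0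
    | succ j => rw [hnss]; exact_mod_cast hf3 (j+1) (ns j)
  -- build gap components
  have gaps : ∀ j : ℕ, ∃ a b : ℝ, IsGapComponent E a b ∧ τ (ns j) ≤ a ∧ a ≤ c * τ (ns j) ∧
      (c + j + 1) * τ (ns j) ≤ b := by
    intro j
    have hτj : (1:ℝ) ≤ τ (ns j) := hτ1 j
    have hτjpos : (0:ℝ) < τ (ns j) := lt_of_lt_of_le one_pos hτj
    obtain ⟨e', he'⟩ := unbounded_range_dist hX p ((c + j + 1) * τ (ns j))
    have hdisj : ∀ x ∈ Set.Ioo (c * τ (ns j)) ((c + j + 1) * τ (ns j)), x ∉ E := by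
      intro x hx hxE
      exact hemp j ⟨x, hxE, hx.1.le, hx.2.le⟩
    obtain ⟨a, b, hab, h1, h2, h3, _⟩ := exists_gapComponent (E := E)
      (hτE (ns j)) (⟨e', rfl⟩ : dist e' p ∈ E) (le_trans zero_le_one hτj)
      (le_mul_of_one_le_left hτjpos.le hc.le)
      (by nlinarith) he' hdisj
    exact ⟨a, b, hab, h1, h2, h3⟩
  choose a b hab ha1 ha2 hb1 using gaps
  -- a tends to infinity
  have hatop : Tendsto a atTop atTop :=
    tendsto_atTop_mono ha1 (hτtop.comp hnsmono.tendsto_atTop)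
  obtain ⟨θ, hθ, haθ⟩ := exists_subseq_strictMono_comp hatop
  -- contradict hpor with φ := ns ∘ θ
  apply hpor (fun i => ns (θ i)) (hnsmono.comp hθ)
  refine ⟨a ∘ θ, b ∘ θ, ⟨fun i => hab (θ i), ⟨0, fun i _ => (haθ (Nat.lt_succ_self i)).le⟩,
    hatop.comp hθ.tendsto_atTop, ?_⟩, 1/2, c+1, by norm_num, by linarith, fun i => ?_⟩
  · -- (b - a)/b → 1
    have hbound : ∀ i, 1 - c / (c + θ i + 1) ≤ (b (θ i) - a (θ i)) / b (θ i) ∧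
        (b (θ i) - a (θ i)) / b (θ i) ≤ 1 := by
      intro i
      set j := θ i
      have hτj : (1:ℝ) ≤ τ (ns j) := hτ1 j
      have hτjpos : (0:ℝ) < τ (ns j) := lt_of_lt_of_le one_pos hτj
      have hcj : (0:ℝ) < c + j + 1 := by
        have : (0:ℝ) ≤ (j:ℝ) := Nat.cast_nonneg j
        linarith
      have hbpos : 0 < b j := lt_of_lt_of_le (by positivity) (hb1 j)
      have hapos : 0 < a j := lt_of_lt_of_le hτjpos (ha1 j)
      constructor
      · rw [sub_div, div_self (ne_of_gt hbpos), sub_le_sub_iff_left]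
        calc a j / b j ≤ (c * τ (ns j)) / ((c + j + 1) * τ (ns j)) := by
              apply div_le_div₀ (by positivity) (ha2 j) (by positivity) (hb1 j)
          _ = c / (c + j + 1) := by
              rw [mul_div_mul_right _ _ (ne_of_gt hτjpos)]
      · rw [div_le_one hbpos]; linarith
    have h0 : Tendsto (fun i => c / (c + (θ i : ℝ) + 1)) atTop (𝓝 0) := by
      apply Tendsto.div_atTop tendsto_const_nhds
      apply tendsto_atTop_add_const_right
      apply tendsto_atTop_add_const_left
      exact tendsto_natCast_atTop_atTop.comp hθ.tendsto_atTop
    have hlow : Tendsto (fun i => 1 - c / (c + (θ i : ℝ) + 1)) atTop (𝓝 1) := by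
      have := (tendsto_const_nhds (x := (1:ℝ))).sub h0
      simpa using this
    exact tendsto_of_tendsto_of_tendsto_of_le_of_le hlow tendsto_const_nhds
      (fun i => (hbound i).1) (fun i => (hbound i).2)
  · -- BiComparable
    have hτj : (1:ℝ) ≤ τ (ns (θ i)) := hτ1 (θ i)
    constructor
    · have := ha1 (θ i)
      simp only [Function.comp_apply]
      linarith
    · have := ha2 (θ i)
      simp only [Function.comp_apply]
      nlinarith

lemma part1 {X : Type*} [MetricSpace X] (hX : ¬ Bornology.IsBounded (Set.univ : Set X))
    (p : X) (τ : ℕ → ℝ)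
    (hτ : MemEInfty (Set.range fun x : X => dist x p) τ)
    (hpor : ∀ φ : ℕ → ℕ, StrictMono φ →
      ¬ TauStronglyPorousAtInfty (Set.range fun x : X => dist x p) (τ ∘ φ)) :
    ∃ r : ℕ → ℝ, ScalingSeq r ∧ ∃ C : Set (ℕ → X), IsPretangent dist p r C ∧
      ∀ M : ℝ, ∃ x ∈ C, ∃ y ∈ C, M < seqDist dist r x y := by
  classical
  obtain ⟨hτE, _, hτtop⟩ := hτ
  set E := Set.range fun x : X => dist x p with hE
  -- the scale function F from Lemma L
  have L : ∀ c : ℝ, ∃ C, 1 < c → (c < C ∧ ∀ᶠ n in atTop,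
      (E ∩ Set.Icc (c * τ n) (C * τ n)).Nonempty) := by
    intro c
    by_cases hc : 1 < c
    · obtain ⟨C, h1, h2⟩ := lemmaL hX p τ hτE hτtop hpor c hc
      exact ⟨C, fun _ => ⟨h1, h2⟩⟩
    · exact ⟨0, fun h => absurd h hc⟩
  choose F hF using L
  set cs : ℕ → ℝ := fun k => Nat.rec (2:ℝ) (fun _ prev => F prev + 1) k with hcs
  have hcs0 : cs 0 = 2 := rfl
  have hcss : ∀ k, cs (k+1) = F (cs k) + 1 := fun k => rfl
  have hcs1 : ∀ k, 1 < cs k := by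
    intro k
    induction k with
    | zero => rw [hcs0]; norm_num
    | succ k ih =>
      rw [hcss]
      have := (hF (cs k) ih).1
      linarith
  have hcsF : ∀ k, cs k < F (cs k) := fun k => (hF (cs k) (hcs1 k)).1
  have hcsk : ∀ k : ℕ, (k:ℝ) + 2 ≤ cs k := by
    intro k
    induction k with
    | zero => rw [hcs0]; norm_num
    | succ k ih =>
      rw [hcss]
      push_cast
      have := hcsF k
      linarith
  have hFk : ∀ k, ∀ᶠ n in atTop, (E ∩ Set.Icc (cs k * τ n) (F (cs k) * τ n)).Nonempty :=
    fun k => (hF (cs k) (hcs1 k)).2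
  -- choose points realizing these intersections
  have pts : ∀ k, ∀ᶠ n in atTop, ∃ x : X,
      cs k * τ n ≤ dist x p ∧ dist x p ≤ F (cs k) * τ n := by
    intro k
    filter_upwards [hFk k]
    rintro n ⟨e, ⟨x, rfl⟩, h1, h2⟩
    exact ⟨x, h1, h2⟩
  set zx : ℕ → ℕ → X := fun k n =>
    if h : ∃ x : X, cs k * τ n ≤ dist x p ∧ dist x p ≤ F (cs k) * τ n then h.choose else p
    with hzxdef
  have hzx : ∀ k, ∀ᶠ n in atTop,
      cs k * τ n ≤ dist (zx k n) p ∧ dist (zx k n) p ≤ F (cs k) * τ n := by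
    intro k
    filter_upwards [pts k] with n hn
    simp only [hzxdef, dif_pos hn]
    exact hn.choose_spec
  set zz : ℕ → ℕ → X := fun k n => Nat.casesOn k p (fun k' => zx k' n) with hzzdef
  set D : ℕ → ℝ := fun k => Nat.casesOn k (0:ℝ) (fun k' => F (cs k')) with hDdef
  have hτ1 : ∀ᶠ n in atTop, 1 ≤ τ n := hτtop.eventually_ge_atTop 1
  have hzzub : ∀ k, ∀ᶠ n in atTop, dist (zz k n) p ≤ D k * τ n := by
    intro k
    cases k with
    | zero =>
      filter_upwards [hτ1] with n _
      simp [hzzdef, hDdef]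
    | succ k =>
      filter_upwards [hzx k] with n hn
      exact hn.2
  -- the diagonal family
  set g : ℕ → ℕ → ℝ := fun i n =>
    dist (zz (Nat.unpair i).1 n) (zz (Nat.unpair i).2 n) / τ n with hgdef
  have gbdd : ∀ i, ∃ B : ℝ, ∀ᶠ n in atTop, |g i n| ≤ B := by
    intro i
    refine ⟨D (Nat.unpair i).1 + D (Nat.unpair i).2, ?_⟩
    filter_upwards [hzzub (Nat.unpair i).1, hzzub (Nat.unpair i).2, hτ1] with n h1 h2 h3
    have hτpos : (0:ℝ) < τ n := lt_of_lt_of_le one_pos h3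
    have hd : dist (zz (Nat.unpair i).1 n) (zz (Nat.unpair i).2 n)
        ≤ (D (Nat.unpair i).1 + D (Nat.unpair i).2) * τ n := by
      calc dist (zz (Nat.unpair i).1 n) (zz (Nat.unpair i).2 n)
          ≤ dist (zz (Nat.unpair i).1 n) p + dist (zz (Nat.unpair i).2 n) p :=
            dist_triangle_right _ _ _
        _ ≤ (D (Nat.unpair i).1 + D (Nat.unpair i).2) * τ n := by rw [add_mul]; gcongr
    rw [abs_of_nonneg (div_nonneg dist_nonneg hτpos.le), div_le_iff₀ hτpos]
    exact hd
  obtain ⟨φ₀, hφ₀, hlim0⟩ := exists_subseq_forall_tendsto g gbdd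
  -- shift to make τ ∘ φ' ≥ 1 everywhere
  obtain ⟨M₀, hM₀⟩ := eventually_atTop.mp (hφ₀.tendsto_atTop.eventually hτ1)
  set φ' : ℕ → ℕ := fun n => φ₀ (n + M₀) with hφ'def
  have hφ' : StrictMono φ' := fun a b h => hφ₀ (by omega)
  set r : ℕ → ℝ := fun n => τ (φ' n) with hrdef
  have hr1 : ∀ n, 1 ≤ r n := fun n => hM₀ (n + M₀) (by omega)
  have hrpos : ∀ n, (0:ℝ) < r n := fun n => lt_of_lt_of_le one_pos (hr1 n)
  have hr : ScalingSeq r := ⟨hrpos, hτtop.comp hφ'.tendsto_atTop⟩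
  have hlim : ∀ i, ∃ L : ℝ, Tendsto (fun n => g i (φ' n)) atTop (𝓝 L) := by
    intro i
    obtain ⟨L, hL⟩ := hlim0 i
    exact ⟨L, hL.comp (tendsto_add_atTop_nat M₀)⟩
  choose Lm hLm using hlim
  -- the distinguished sequences
  set ξ : ℕ → ℕ → X := fun k n => zx k (φ' n) with hξdef
  have hsl : ∀ k, Tendsto (fun n => dist (ξ k n) p / r n) atTop (𝓝 (Lm (Nat.pair (k+1) 0))) := by
    intro k
    have := hLm (Nat.pair (k+1) 0)
    simpa [hgdef, Nat.unpair_pair, show ∀ n, zz 0 n = p from fun _ => rfl] using this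
  have hLkj : ∀ k j, Tendsto (fun n => dist (ξ k n) (ξ j n) / r n) atTop
      (𝓝 (Lm (Nat.pair (k+1) (j+1)))) := by
    intro k j
    have := hLm (Nat.pair (k+1) (j+1))
    simpa [hgdef, Nat.unpair_pair] using this
  have hξbd : ∀ k, ∀ᶠ n in atTop,
      cs k * r n ≤ dist (ξ k n) p ∧ dist (ξ k n) p ≤ F (cs k) * r n :=
    fun k => hφ'.tendsto_atTop.eventually (hzx k)
  have hslb : ∀ k, cs k ≤ Lm (Nat.pair (k+1) 0) := by
    intro k
    apply ge_of_tendsto (hsl k)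
    filter_upwards [hξbd k] with n hn
    rw [le_div_iff₀ (hrpos n)]
    exact hn.1
  have hsub : ∀ k, Lm (Nat.pair (k+1) 0) ≤ F (cs k) := by
    intro k
    apply le_of_tendsto (hsl k)
    filter_upwards [hξbd k] with n hn
    rw [div_le_iff₀ (hrpos n)]
    exact hn.2
  have hadm : ∀ k, SeqAdm dist p r (ξ k) := by
    intro k
    constructor
    · apply tendsto_atTop_mono' atTop ?_ hr.2
      filter_upwards [hξbd k] with n hn
      calc r n = 1 * r n := (one_mul _).symm
        _ ≤ cs k * r n := by
            have := hcs1 k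
            have := hrpos n
            nlinarith
        _ ≤ dist (ξ k n) p := hn.1
    · exact ⟨_, hsl k⟩
  have hrefl : ∀ k, SeqEquiv dist r (ξ k) (ξ k) := by
    intro k
    have : (fun n => dist (ξ k n) (ξ k n) / r n) = fun _ => (0:ℝ) := by
      funext n; simp
    rw [SeqEquiv, this]
    exact tendsto_const_nhds
  -- stability transfers across equivalence
  have hstable : ∀ (y z : ℕ → X) (ky kz : ℕ), SeqEquiv dist r (ξ ky) y →
      SeqEquiv dist r (ξ kz) z →
      Tendsto (fun n => dist (y n) (z n) / r n) atTop (𝓝 (Lm (Nat.pair (ky+1) (kz+1)))) := by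
    intro y z ky kz hy hz
    have hdiff : Tendsto (fun n => dist (y n) (z n) / r n
        - dist (ξ ky n) (ξ kz n) / r n) atTop (𝓝 0) := by
      apply squeeze_zero_norm (a := fun n => dist (ξ ky n) (y n) / r n
        + dist (ξ kz n) (z n) / r n)
      · intro n
        have h1 : dist (y n) (z n) ≤ dist (ξ ky n) (y n) + dist (ξ ky n) (ξ kz n)
            + dist (ξ kz n) (z n) := by
          calc dist (y n) (z n) ≤ dist (y n) (ξ ky n) + dist (ξ ky n) (ξ kz n)
              + dist (ξ kz n) (z n) := dist_triangle4 _ _ _ _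
            _ = dist (ξ ky n) (y n) + dist (ξ ky n) (ξ kz n) + dist (ξ kz n) (z n) := by
              rw [dist_comm]
        have h2 : dist (ξ ky n) (ξ kz n) ≤ dist (ξ ky n) (y n) + dist (y n) (z n)
            + dist (ξ kz n) (z n) := by
          calc dist (ξ ky n) (ξ kz n) ≤ dist (ξ ky n) (y n) + dist (y n) (z n)
              + dist (z n) (ξ kz n) := dist_triangle4 _ _ _ _
            _ = dist (ξ ky n) (y n) + dist (y n) (z n) + dist (ξ kz n) (z n) := by
              rw [dist_comm (z n)]
        have hnum : |dist (y n) (z n) - dist (ξ ky n) (ξ kz n)|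
            ≤ dist (ξ ky n) (y n) + dist (ξ kz n) (z n) :=
          abs_le.mpr ⟨by linarith, by linarith⟩
        rw [div_sub_div_same, Real.norm_eq_abs, abs_div,
          abs_of_pos (hrpos n), ← add_div]
        gcongr
        exact (hrpos n).le
      · have := hy.add hz
        simpa using this
    have := hdiff.add (hLkj ky kz)
    rw [zero_add] at this
    apply this.congr
    intro n
    ring
  -- equivalence transfers
  have htrans : ∀ (y z : ℕ → X) (k : ℕ), SeqEquiv dist r (ξ k) y →
      SeqEquiv dist r y z → SeqEquiv dist r (ξ k) z := by
    intro y z k h1 h2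
    apply squeeze_zero (fun n => div_nonneg dist_nonneg (hrpos n).le)
      (g := fun n => dist (ξ k n) (y n) / r n + dist (y n) (z n) / r n)
    · intro n
      rw [← add_div, div_le_div_iff₀ (hrpos n) (hrpos n)]
      nlinarith [dist_triangle (ξ k n) (y n) (z n), hrpos n]
    · have := h1.add h2
      simpa using this
  -- the base clique
  set C₀ : Set (ℕ → X) := {y | SeqAdm dist p r y ∧ ∃ k, SeqEquiv dist r (ξ k) y} with hC₀def
  have hC₀clique : IsCliqueSet dist p r C₀ := by
    refine ⟨fun y hy => hy.1, ?_, ?_⟩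
    · rintro y ⟨hya, k, hk⟩ z hza hyz
      exact ⟨hza, k, htrans y z k hk hyz⟩
    · rintro y ⟨hya, ky, hky⟩ z ⟨hza, kz, hkz⟩
      exact ⟨_, hstable y z ky kz hky hkz⟩
  have hξC₀ : ∀ k, ξ k ∈ C₀ := fun k => ⟨hadm k, k, hrefl k⟩
  -- Zorn
  set S : Set (Set (ℕ → X)) := {D | IsCliqueSet dist p r D} with hSdef
  have hchain : ∀ c ⊆ S, IsChain (fun x1 x2 => x1 ⊆ x2) c → c.Nonempty →
      ∃ ub ∈ S, ∀ s ∈ c, s ⊆ ub := by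
    intro c hc hch _
    refine ⟨⋃₀ c, ⟨?_, ?_, ?_⟩, fun s hs => Set.subset_sUnion_of_mem hs⟩
    · rintro x ⟨d, hd, hxd⟩
      exact (hc hd).1 x hxd
    · rintro x ⟨d, hd, hxd⟩ y hya hxy
      exact ⟨d, hd, (hc hd).2.1 x hxd y hya hxy⟩
    · rintro x ⟨d1, hd1, hx⟩ y ⟨d2, hd2, hy⟩
      rcases hch.total hd1 hd2 with hsub | hsub
      · exact (hc hd2).2.2 x (hsub hx) y hy
      · exact (hc hd1).2.2 x hx y (hsub hy)
  obtain ⟨m, hC₀m, hmax⟩ := zorn_subset_nonempty S hchain C₀ hC₀clique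
  refine ⟨r, hr, m, ⟨hmax.1, fun D hD hsub => Set.Subset.antisymm (hmax.2 hD hsub) hsub⟩, ?_⟩
  -- unboundedness
  intro M
  obtain ⟨k, hk⟩ := exists_nat_gt (M + F (cs 0))
  refine ⟨ξ 0, hC₀m (hξC₀ 0), ξ k, hC₀m (hξC₀ k), ?_⟩
  have heq : seqDist dist r (ξ 0) (ξ k) = Lm (Nat.pair 1 (k+1)) := (hLkj 0 k).limUnder_eq
  rw [heq]
  have hlow : Lm (Nat.pair (k+1) 0) - Lm (Nat.pair 1 0) ≤ Lm (Nat.pair 1 (k+1)) := by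
    apply le_of_tendsto_of_tendsto' ((hsl k).sub (hsl 0)) (hLkj 0 k)
    intro n
    rw [div_sub_div_same, div_le_div_iff₀ (hrpos n) (hrpos n)]
    have := dist_triangle (ξ k n) (ξ 0 n) p
    have hcomm : dist (ξ k n) (ξ 0 n) = dist (ξ 0 n) (ξ k n) := dist_comm _ _
    nlinarith [hrpos n]
  have h1 : cs k ≤ Lm (Nat.pair (k+1) 0) := hslb k
  have h2 : Lm (Nat.pair 1 0) ≤ F (cs 0) := hsub 0
  have h3 := hcsk k
  linarith

/-- Part 2: an unbounded pretangent space rules out ω-strong porosity. -/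
lemma part2 {X : Type*} [MetricSpace X] (p : X) (r : ℕ → ℝ) (hr : ScalingSeq r)
    (C : Set (ℕ → X)) (hC : IsPretangent dist p r C)
    (hub : ∀ M : ℝ, ∃ x ∈ C, ∃ y ∈ C, M < seqDist dist r x y) :
    ¬ OmegaStronglyPorousAtInfty (Set.range fun x : X => dist x p) := by
  set E := Set.range fun x : X => dist x p with hE
  -- for every k, get a sequence in C with normalized distance to p exceeding k/2
  have key : ∀ k : ℕ, ∃ (z : ℕ → X) (s : ℝ), (k:ℝ)/2 < s ∧
      Tendsto (fun n => dist (z n) p / r n) atTop (𝓝 s) ∧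
      Tendsto (fun n => dist (z n) p) atTop atTop := by
    intro k
    obtain ⟨x, hx, y, hy, hxy⟩ := hub k
    obtain ⟨L, hL⟩ := hC.1.2.2 x hx y hy
    have hLd : seqDist dist r x y = L := hL.limUnder_eq
    rw [hLd] at hxy
    obtain ⟨hxa, q, hq⟩ := hC.1.1 x hx
    obtain ⟨hya, s', hs'⟩ := hC.1.1 y hy
    have hle : L ≤ q + s' := by
      have := le_of_tendsto_of_tendsto' hL (hq.add hs') (fun n => ?_)
      · exact this
      · have h1 : dist (x n) (y n) ≤ dist (x n) p + dist (y n) p := dist_triangle_right _ _ _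
        have h2 : (0:ℝ) < r n := hr.1 n
        calc dist (x n) (y n) / r n ≤ (dist (x n) p + dist (y n) p) / r n := by gcongr
          _ = dist (x n) p / r n + dist (y n) p / r n := add_div _ _ _
    rcases le_total q s' with h | h
    · exact ⟨y, s', by linarith, hs', hya⟩
    · exact ⟨x, q, by linarith, hq, hxa⟩
  choose z s hs hzs hztop using key
  -- the base sequence
  obtain ⟨ψ, hψ, hwψ⟩ := exists_subseq_strictMono_comp (hztop 3)
  set w : ℕ → ℝ := fun n => dist (z 3 n) p with hw
  set τ : ℕ → ℝ := fun n => w (ψ n) with hτ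
  intro hRHS
  obtain ⟨φ, hφ, a, b, ⟨hgap, hainc, hatop, hba1⟩, c₁, c₂, hc₁, hc₂, hcomp⟩ :=
    hRHS τ ⟨fun n => ⟨z 3 (ψ n), rfl⟩, ⟨0, fun n _ => (hwψ (Nat.lt_succ_self n)).le⟩,
      (hztop 3).comp hψ.tendsto_atTop⟩
  -- choose a large k
  have hs3 : (0:ℝ) < s 3 := lt_trans (by norm_num) (hs 3)
  obtain ⟨k, hk⟩ := exists_nat_gt (2 * (s 3 * (c₂ + 1)))
  have hsk : s 3 * (c₂ + 1) < s k := by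
    have := hs k; linarith
  set ρ : ℝ := s k / s 3 with hρ
  have hρ1 : c₂ < ρ := by
    rw [hρ, lt_div_iff₀ hs3]
    nlinarith
  -- the ratio sequence tends to ρ
  have hdiv : Tendsto (fun n => dist (z k n) p / w n) atTop (𝓝 ρ) := by
    have h1 := (hzs k).div (hzs 3) (ne_of_gt hs3)
    have h2 : ∀ᶠ n in atTop, (fun n => dist (z k n) p / r n) n / (fun n => dist (z 3 n) p / r n) n
        = dist (z k n) p / w n := by
      filter_upwards with n
      have hrn : r n ≠ 0 := ne_of_gt (hr.1 n)
      rcases eq_or_ne (w n) 0 with h | h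
      · rw [show dist (z 3 n) p = (0:ℝ) from h, zero_div, div_zero, h, div_zero]
      · field_simp
        exact mul_div_cancel_right₀ _ h
    exact (h1.congr' h2)
  set m2φ : ℕ → ℕ := fun m => ψ (φ m) with hm2φ
  have hFρ : Tendsto (fun m => dist (z k (m2φ m)) p / τ (φ m)) atTop (𝓝 ρ) :=
    hdiv.comp (hψ.tendsto_atTop.comp hφ.tendsto_atTop)
  -- eventual bounds
  have hFev : ∀ᶠ m in atTop, dist (z k (m2φ m)) p / τ (φ m) ∈ Set.Ioo c₂ (ρ+1) :=
    hFρ.eventually (Ioo_mem_nhds hρ1 (by linarith))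
  have haev : ∀ᶠ m in atTop, (0:ℝ) < a m := hatop.eventually_gt_atTop 0
  have hab0 : Tendsto (fun m => a m / b m) atTop (𝓝 0) := by
    have heq : ∀ᶠ m in atTop, 1 - (b m - a m) / b m = a m / b m := by
      filter_upwards [haev] with m hm
      have hb : b m ≠ 0 := ne_of_gt (lt_trans hm (hgap m).1)
      field_simp
      ring
    have h2 := (tendsto_const_nhds (x := (1:ℝ))).sub hba1
    rw [show (1:ℝ) - 1 = 0 by ring] at h2
    exact h2.congr' heq
  have hρpos : 0 < ρ := lt_trans hc₂ hρ1
  have hbev : ∀ᶠ m in atTop, a m / b m < c₁/(ρ+1) := by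
    apply hab0.eventually_lt_const
    positivity
  obtain ⟨m, hF, ha0, hab⟩ := (hFev.and (haev.and hbev)).exists
  -- derive the contradiction: dist (z k (m2φ m)) p lies in the gap but belongs to E
  have hcm := hcomp m
  simp only [Function.comp_apply] at hcm
  have hτpos : 0 < τ (φ m) := by nlinarith [hcm.2]
  have hgapm := hgap m
  have hbpos : 0 < b m := lt_trans ha0 hgapm.1
  have hba : (ρ+1)/c₁ * a m < b m := by
    rw [div_lt_div_iff₀ hbpos (by positivity)] at hab
    rw [div_mul_eq_mul_div, div_lt_iff₀ hc₁]
    nlinarith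
  set u : ℝ := dist (z k (m2φ m)) p with hu
  have huτ : u = (u / τ (φ m)) * τ (φ m) := by field_simp
  have h1 : a m < u := by
    have hlow := hF.1
    calc a m < c₂ * τ (φ m) := hcm.2
      _ < (u / τ (φ m)) * τ (φ m) := by nlinarith
      _ = u := huτ.symm
  have h2 : u < b m := by
    have hhigh := hF.2
    have hτa : τ (φ m) < a m / c₁ := by
      rw [lt_div_iff₀ hc₁]; nlinarith [hcm.1]

    calc u = (u / τ (φ m)) * τ (φ m) := huτ
      _ < (ρ+1) * τ (φ m) := by nlinarith
      _ < (ρ+1) * (a m / c₁) := by nlinarith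
      _ = (ρ+1)/c₁ * a m := by ring
      _ < b m := hba
  have hmem : u ∈ Set.Ioo (a m) (b m) := ⟨h1, h2⟩
  have : u ∉ E := (interior_subset (hgapm.2.1 hmem)).2
  exact this ⟨z k (m2φ m), rfl⟩


/-- **Theorem on boundedness.** Let `(X,d)` be an unbounded metric space
and `p ∈ X`.  All pretangent spaces to `X` at infinity (over all scaling sequences) are
bounded if and only if the set `S_p(X) = {d(x,p) : x ∈ X}` is `ω`-strongly porous at
infinity. -/
theorem all_pretangent_bounded_iff_omegaStronglyPorous {X : Type*} [MetricSpace X]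
    (hX : ¬ Bornology.IsBounded (Set.univ : Set X)) (p : X) :
    (∀ r : ℕ → ℝ, ScalingSeq r → ∀ C : Set (ℕ → X), IsPretangent dist p r C →
      ∃ M : ℝ, ∀ x ∈ C, ∀ y ∈ C, seqDist dist r x y ≤ M) ↔
    OmegaStronglyPorousAtInfty (Set.range fun x : X => dist x p) := by
  constructor
  · intro h τ hτmem
    by_contra hno
    push_neg at hno
    have hpor : ∀ φ : ℕ → ℕ, StrictMono φ →
        ¬ TauStronglyPorousAtInfty (Set.range fun x : X => dist x p) (τ ∘ φ) :=
      fun φ hφ hT => (hno φ) hφ hT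
    obtain ⟨r, hr, C, hC, hub⟩ := part1 hX p τ hτmem hpor
    obtain ⟨M, hM⟩ := h r hr C hC
    obtain ⟨x, hx, y, hy, hxy⟩ := hub M
    exact absurd (hM x hx y hy) (not_le.mpr hxy)
  · intro hRHS r hr C hC
    by_contra hno
    push_neg at hno
    exact part2 p r hr C hC hno hRHS
end
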